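/- arXiv:2011.03978 — 8 statements merged into one kernel-verified Lean document; each statement's English description precedes it below -/
import Mathlib

section
/- Let A be a set, n ≥ 1, and let ~ be an equivalence relation on a subset S of A^n. Let G be a permutation group acting on A that is n-"primitive" and leaves the ~-classes invariant. Then any approximation η of ~ (invariant under G) which is presmooth with respect to G is also smooth with respect to G. -/
namespace Paper

/-! ### Tuples, permutations, orbits -/

/-- Componentwise application of a `k`-ary operation to `k` many `n`-tuples. -/
def appN {A : Type*} {k n : ℕ} (f : (Fin k → A) → A) (xs : Fin k → Fin n → A) : Fin n → A :=
  fun j => f fun i => xs i j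

/-- Two tuples are disjoint if they share no entries. -/
def DisjTup {A : Type*} {n : ℕ} (a b : Fin n → A) : Prop := ∀ i j, a i ≠ b j

/-- Componentwise action of a permutation on a tuple. -/
def permTup {A : Type*} {n : ℕ} (g : Equiv.Perm A) (a : Fin n → A) : Fin n → A := fun i => g (a i)

/-- Orbit equivalence of tuples under a set of permutations. -/
def OrbEq {A : Type*} (G : Set (Equiv.Perm A)) {n : ℕ} (a b : Fin n → A) : Prop :=
  ∃ g ∈ G, permTup g a = b

/-- `r` is an equivalence relation with support `S`. -/
structure EqvOn {X : Type*} (S : Set X) (r : X → X → Prop) : Prop where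
  refl : ∀ a ∈ S, r a a
  symm : ∀ {a b}, r a b → r b a
  trans : ∀ {a b c}, r a b → r b c → r a c
  dom : ∀ {a b}, r a b → a ∈ S ∧ b ∈ S

/-! ### Function clones -/

/-- A function clone, given as a family of sets of finitary operations:
it contains all projections and is closed under composition. -/
def IsClone {A : Type*} (C : ∀ k : ℕ, Set ((Fin k → A) → A)) : Prop :=
  (∀ (k : ℕ) (i : Fin k), (fun x => x i) ∈ C k) ∧
  (∀ (k m : ℕ) (f : (Fin k → A) → A) (g : Fin k → (Fin m → A) → A),
    f ∈ C k → (∀ i, g i ∈ C m) → (fun x => f fun i => g i x) ∈ C m)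

/-- Membership of a unary function in a clone. -/
def UnaryMem {A : Type*} (C : ∀ k : ℕ, Set ((Fin k → A) → A)) (u : A → A) : Prop :=
  (fun x : Fin 1 → A => u (x 0)) ∈ C 1

/-- The permutations invertibly contained in a clone. -/
def GrpOf {A : Type*} (C : ∀ k : ℕ, Set ((Fin k → A) → A)) : Set (Equiv.Perm A) :=
  {σ : Equiv.Perm A | UnaryMem C ⇑σ ∧ UnaryMem C ⇑σ.symm}

/-- A set of permutations is oligomorphic: finitely many orbits on `m`-tuples for all `m`. -/
def Oligo {A : Type*} (G : Set (Equiv.Perm A)) : Prop :=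
  ∀ m : ℕ, ∃ l : List (Fin m → A), ∀ a : Fin m → A, ∃ b ∈ l, OrbEq G b a

/-- The clone is topologically closed (w.r.t. pointwise convergence). -/
def CloneClosed {A : Type*} (C : ∀ k : ℕ, Set ((Fin k → A) → A)) : Prop :=
  ∀ (k : ℕ) (f : (Fin k → A) → A),
    (∀ F : Finset (Fin k → A), ∃ g ∈ C k, ∀ x ∈ F, f x = g x) → f ∈ C k

/-- Model-complete core: the unary part coincides with the closure of the invertibles. -/
def MCCoreClone {A : Type*} (C : ∀ k : ℕ, Set ((Fin k → A) → A)) : Prop :=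
  ∀ u : A → A, UnaryMem C u ↔ ∀ F : Finset A, ∃ σ ∈ GrpOf C, ∀ x ∈ F, u x = σ x

/-- Invariance of a set of `n`-tuples under the componentwise action of a clone. -/
def SetInvN {A : Type*} (C : ∀ k : ℕ, Set ((Fin k → A) → A)) {n : ℕ}
    (S : Set (Fin n → A)) : Prop :=
  ∀ (k : ℕ) (f : (Fin k → A) → A), f ∈ C k →
    ∀ xs : Fin k → Fin n → A, (∀ i, xs i ∈ S) → appN f xs ∈ S

/-- Invariance of a binary relation on `n`-tuples under a clone. -/
def RelInvN {A : Type*} (C : ∀ k : ℕ, Set ((Fin k → A) → A)) {n : ℕ}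
    (r : (Fin n → A) → (Fin n → A) → Prop) : Prop :=
  ∀ (k : ℕ) (f : (Fin k → A) → A), f ∈ C k → ∀ xs ys : Fin k → Fin n → A,
    (∀ i, r (xs i) (ys i)) → r (appN f xs) (appN f ys)

/-- Equational triviality: existence of a clone homomorphism to the clone of projections. -/
def EquaTrivial {A : Type*} (C : ∀ k : ℕ, Set ((Fin k → A) → A)) : Prop :=
  ∃ idx : ∀ k : ℕ, ((Fin k → A) → A) → Fin k,
    (∀ (k : ℕ) (i : Fin k), idx k (fun x => x i) = i) ∧
    (∀ (k m : ℕ) (f : (Fin k → A) → A) (g : Fin k → (Fin m → A) → A),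
      f ∈ C k → (∀ i, g i ∈ C m) →
      idx m (fun x => f fun i => g i x) = idx m (g (idx k f)))

/-- A clone is `n`-canonical w.r.t. `G`: it preserves `G`-orbit-equivalence of `n`-tuples. -/
def NCanonical {A : Type*} (G : Set (Equiv.Perm A)) (n : ℕ)
    (C : ∀ k : ℕ, Set ((Fin k → A) → A)) : Prop :=
  ∀ (k : ℕ) (f : (Fin k → A) → A), f ∈ C k → ∀ xs ys : Fin k → Fin n → A,
    (∀ i, OrbEq G (xs i) (ys i)) → OrbEq G (appN f xs) (appN f ys)

/-! ### Smooth approximations -/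

/-- `G` leaves the `r`-classes invariant. -/
def ClassesInv {A : Type*} (G : Set (Equiv.Perm A)) {n : ℕ} (S : Set (Fin n → A))
    (r : (Fin n → A) → (Fin n → A) → Prop) : Prop :=
  ∀ g ∈ G, ∀ a ∈ S, r (permTup g a) a

/-- `G` leaves the relation `η` invariant. -/
def GRelInv {A : Type*} (G : Set (Equiv.Perm A)) {n : ℕ}
    (η : (Fin n → A) → (Fin n → A) → Prop) : Prop :=
  ∀ g ∈ G, ∀ a b, η a b → η (permTup g a) (permTup g b)

/-- `η` (an equivalence relation on `S' ⊇ S`) approximates `r`: its restriction to `S`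
refines `r`. -/
def ApproxOf {A : Type*} {n : ℕ} (S S' : Set (Fin n → A))
    (r η : (Fin n → A) → (Fin n → A) → Prop) : Prop :=
  S ⊆ S' ∧ EqvOn S' η ∧ ∀ a b, a ∈ S → b ∈ S → η a b → r a b

/-- Presmooth approximation: each `r`-class meets some `η`-class in a set containing two
disjoint tuples in the same `G`-orbit. -/
def Presmooth {A : Type*} (G : Set (Equiv.Perm A)) {n : ℕ} (S : Set (Fin n → A))
    (r η : (Fin n → A) → (Fin n → A) → Prop) : Prop :=
  ∀ a ∈ S, ∃ b c, b ∈ S ∧ c ∈ S ∧ r a b ∧ r a c ∧ η b c ∧ OrbEq G b c ∧ DisjTup b c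

/-- Smooth approximation: each `r`-class meets some `η`-class in a set containing
a full `G`-orbit. -/
def Smooth {A : Type*} (G : Set (Equiv.Perm A)) {n : ℕ} (S : Set (Fin n → A))
    (r η : (Fin n → A) → (Fin n → A) → Prop) : Prop :=
  ∀ a ∈ S, ∃ b, b ∈ S ∧ r a b ∧ ∀ c, OrbEq G b c → c ∈ S ∧ r a c ∧ η b c

/-- Very smooth approximation: `G`-orbit-equivalence refines `η` on `S`. -/
def VerySmooth {A : Type*} (G : Set (Equiv.Perm A)) {n : ℕ} (S : Set (Fin n → A))
    (η : (Fin n → A) → (Fin n → A) → Prop) : Prop :=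
  ∀ a b, a ∈ S → b ∈ S → OrbEq G a b → η a b

/-- `G` is `n`-"primitive": on each orbit of `n`-tuples, any `G`-invariant equivalence
relation relating two disjoint tuples is full. -/
def PrimitiveN {A : Type*} (G : Set (Equiv.Perm A)) (n : ℕ) : Prop :=
  ∀ (a₀ : Fin n → A) (r : (Fin n → A) → (Fin n → A) → Prop),
    EqvOn {b | OrbEq G a₀ b} r → GRelInv G r →
    (∃ a b, r a b ∧ DisjTup a b) →
    ∀ a b, OrbEq G a₀ a → OrbEq G a₀ b → r a b

/-! ### Relational structures -/

/-- A relational structure on `M` with signature `(ι, ar)`. -/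
abbrev Struct (M : Type*) (ι : Type) (ar : ι → ℕ) := ∀ i : ι, (Fin (ar i) → M) → Prop

/-- First-order definable relations over `B` (without parameters). -/
inductive FODef {M : Type*} {ι : Type} {ar : ι → ℕ} (B : Struct M ι ar) :
    ∀ {k : ℕ}, ((Fin k → M) → Prop) → Prop
  | basic (i : ι) : FODef B (B i)
  | eq : FODef B (fun x : Fin 2 → M => x 0 = x 1)
  | reindex {m k : ℕ} (σ : Fin m → Fin k) {R : (Fin m → M) → Prop} :
      FODef B R → FODef B (fun x : Fin k → M => R (x ∘ σ))
  | inter {k : ℕ} {R R' : (Fin k → M) → Prop} :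
      FODef B R → FODef B R' → FODef B (fun x => R x ∧ R' x)
  | compl {k : ℕ} {R : (Fin k → M) → Prop} : FODef B R → FODef B (fun x => ¬ R x)
  | ex {k : ℕ} {R : (Fin (k + 1) → M) → Prop} :
      FODef B R → FODef B (fun x : Fin k → M => ∃ a, R (Fin.snoc x a))

/-- Primitive positive definable relations over `B`. -/
inductive PPDef {M : Type*} {ι : Type} {ar : ι → ℕ} (B : Struct M ι ar) :
    ∀ {k : ℕ}, ((Fin k → M) → Prop) → Prop
  | basic (i : ι) : PPDef B (B i)
  | eq : PPDef B (fun x : Fin 2 → M => x 0 = x 1)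
  | reindex {m k : ℕ} (σ : Fin m → Fin k) {R : (Fin m → M) → Prop} :
      PPDef B R → PPDef B (fun x : Fin k → M => R (x ∘ σ))
  | inter {k : ℕ} {R R' : (Fin k → M) → Prop} :
      PPDef B R → PPDef B R' → PPDef B (fun x => R x ∧ R' x)
  | ex {k : ℕ} {R : (Fin (k + 1) → M) → Prop} :
      PPDef B R → PPDef B (fun x : Fin k → M => ∃ a, R (Fin.snoc x a))

def IsAut {M : Type*} {ι : Type} {ar : ι → ℕ} (B : Struct M ι ar) (g : Equiv.Perm M) : Prop :=
  ∀ (i : ι) (x : Fin (ar i) → M), B i x ↔ B i fun t => g (x t)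

def AutSet {M : Type*} {ι : Type} {ar : ι → ℕ} (B : Struct M ι ar) : Set (Equiv.Perm M) :=
  {g | IsAut B g}

/-- Homogeneity: every partial isomorphism between finite substructures extends to
an automorphism. -/
def Homogeneous {M : Type*} {ι : Type} {ar : ι → ℕ} (B : Struct M ι ar) : Prop :=
  ∀ (s : Finset M) (f : M → M),
    (∀ x ∈ s, ∀ y ∈ s, f x = f y → x = y) →
    (∀ (i : ι) (x : Fin (ar i) → M), (∀ t, x t ∈ s) → (B i x ↔ B i fun t => f (x t))) →
    ∃ g : Equiv.Perm M, IsAut B g ∧ ∀ x ∈ s, g x = f x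

def TransitiveStruct {M : Type*} {ι : Type} {ar : ι → ℕ} (B : Struct M ι ar) : Prop :=
  ∀ a b : M, ∃ g ∈ AutSet B, g a = b

def EmbedsVia {N M : Type*} {ι : Type} {ar : ι → ℕ} (X : Struct N ι ar) (B : Struct M ι ar)
    (e : N → M) : Prop :=
  Function.Injective e ∧ ∀ (i : ι) (x : Fin (ar i) → N), X i x ↔ B i fun t => e (x t)

def Embeds {N M : Type*} {ι : Type} {ar : ι → ℕ} (X : Struct N ι ar) (B : Struct M ι ar) :
    Prop :=
  ∃ e, EmbedsVia X B e

def RestrictStruct {N : Type*} {ι : Type} {ar : ι → ℕ} (X : Struct N ι ar) (s : Set N) :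
    Struct s ι ar := fun i x => X i fun t => (x t : N)

/-- The age of `B` has no minimal bound of size 3. -/
def NoMinBound3 {M : Type*} {ι : Type} {ar : ι → ℕ} (B : Struct M ι ar) : Prop :=
  ¬ ∃ X : Struct (Fin 3) ι ar, ¬ Embeds X B ∧
    ∀ s : Finset (Fin 3), s ≠ Finset.univ →
      Embeds (RestrictStruct X (s : Set (Fin 3))) B

def IsEndo {M : Type*} {ι : Type} {ar : ι → ℕ} (B : Struct M ι ar) (e : M → M) : Prop :=
  ∀ (i : ι) (x : Fin (ar i) → M), B i x → B i fun t => e (x t)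

/-- Model-complete core (for structures): every endomorphism agrees with an automorphism
on every finite set. -/
def MCCoreStruct {M : Type*} {ι : Type} {ar : ι → ℕ} (B : Struct M ι ar) : Prop :=
  ∀ e : M → M, IsEndo B e → ∀ s : Finset M, ∃ g ∈ AutSet B, ∀ x ∈ s, g x = e x

/-- The polymorphism clone of a relational structure. -/
def PolOps {M : Type*} {ι : Type} {ar : ι → ℕ} (B : Struct M ι ar) :
    ∀ k : ℕ, Set ((Fin k → M) → M) :=
  fun k => {f | ∀ (i : ι) (t : Fin k → Fin (ar i) → M),
    (∀ j, B i (t j)) → B i fun p => f fun j => t j p}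

def DependsOn {M : Type*} {k : ℕ} (f : (Fin k → M) → M) (i : Fin k) : Prop :=
  ∃ x y : Fin k → M, (∀ j, j ≠ i → x j = y j) ∧ f x ≠ f y

def Essential {M : Type*} {k : ℕ} (f : (Fin k → M) → M) : Prop :=
  ∃ i j, i ≠ j ∧ DependsOn f i ∧ DependsOn f j

/-! ### Tournaments -/

structure IsTournament {T : Type*} (E : T → T → Prop) : Prop where
  irrefl : ∀ x, ¬ E x x
  asymm : ∀ x y, E x y → ¬ E y x
  total : ∀ x y, x ≠ y → E x y ∨ E y x

/-- A binary relation viewed as a relational structure with a single binary relation. -/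
def TS {T : Type*} (E : T → T → Prop) : Struct T Unit (fun _ => 2) :=
  fun _ x => E (x 0) (x 1)

/-- Universality for tournaments: every finite tournament embeds. -/
def UnivTournament {T : Type*} (E : T → T → Prop) : Prop :=
  ∀ (m : ℕ) (R : Fin m → Fin m → Prop), IsTournament R → Embeds (TS R) (TS E)

/-- The pure-equality structure (empty signature). -/
def TrivSig : PEmpty → ℕ := fun e => e.elim

def EqStruct (T : Type*) : Struct T PEmpty TrivSig := fun i => i.elim

/-- `f` preserves `G`-orbit-equivalence on injective tuples. -/
def PreservesOrbInj {M : Type*} (G : Set (Equiv.Perm M)) {k : ℕ}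
    (f : (Fin k → M) → M) : Prop :=
  ∀ (m : ℕ) (xs ys : Fin k → Fin m → M), (∀ i, Function.Injective (xs i)) →
    (∀ i, Function.Injective (ys i)) → (∀ i, OrbEq G (xs i) (ys i)) →
    OrbEq G (appN f xs) (appN f ys)


/-- a presmooth approximation is smooth when the group is n-"primitive". -/
theorem presmooth_implies_smooth {A : Type*} (n : ℕ) (hn : 1 ≤ n)
    (G : Subgroup (Equiv.Perm A))
    (S S' : Set (Fin n → A)) (r η : (Fin n → A) → (Fin n → A) → Prop)
    (hr : EqvOn S r)
    (hprim : PrimitiveN (G : Set (Equiv.Perm A)) n)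
    (hclassinv : ClassesInv (G : Set (Equiv.Perm A)) S r)
    (happrox : ApproxOf S S' r η)
    (hηG : GRelInv (G : Set (Equiv.Perm A)) η)
    (hpre : Presmooth (G : Set (Equiv.Perm A)) S r η) :
    Smooth (G : Set (Equiv.Perm A)) S r η := by
  obtain ⟨hSS', hηeqv, hrefine⟩ := happrox
  intro a ha
  obtain ⟨b, c, hbS, hcS, hab, hac, hbc, ⟨g, hgG, hgbc⟩, hdisj⟩ := hpre a ha
  -- every element of the orbit of b lies in S and is r-related to a
  have horbS : ∀ x, OrbEq (G : Set (Equiv.Perm A)) b x → x ∈ S ∧ r a x := by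
    rintro x ⟨h, hhG, rfl⟩
    have hxb : r (permTup h b) b := hclassinv h hhG b hbS
    exact ⟨(hr.dom hxb).1, hr.trans hab (hr.symm hxb)⟩
  have hbb : OrbEq (G : Set (Equiv.Perm A)) b b :=
    ⟨1, G.one_mem, funext fun i => rfl⟩
  -- the auxiliary relation on the orbit of b
  set ρ : (Fin n → A) → (Fin n → A) → Prop := fun x y =>
    OrbEq (G : Set (Equiv.Perm A)) b x ∧ OrbEq (G : Set (Equiv.Perm A)) b y ∧ η x y
    with hρdef
  have hρeqv : EqvOn {x | OrbEq (G : Set (Equiv.Perm A)) b x} ρ := by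
    constructor
    · intro x hx
      exact ⟨hx, hx, hηeqv.refl x (hSS' (horbS x hx).1)⟩
    · rintro x y ⟨hx, hy, hxy⟩; exact ⟨hy, hx, hηeqv.symm hxy⟩
    · rintro x y z ⟨hx, hy, hxy⟩ ⟨_, hz, hyz⟩; exact ⟨hx, hz, hηeqv.trans hxy hyz⟩
    · rintro x y ⟨hx, hy, _⟩; exact ⟨hx, hy⟩
  have hρinv : GRelInv (G : Set (Equiv.Perm A)) ρ := by
    rintro h hhG x y ⟨⟨u, huG, hux⟩, ⟨v, hvG, hvy⟩, hxy⟩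
    refine ⟨⟨h * u, mul_mem hhG huG, ?_⟩, ⟨h * v, mul_mem hhG hvG, ?_⟩,
      hηG h hhG x y hxy⟩
    · subst hux; rfl
    · subst hvy; rfl
  have hρbc : ρ b c := ⟨hbb, ⟨g, hgG, hgbc⟩, hbc⟩
  have hfull := hprim b ρ hρeqv hρinv ⟨b, c, hρbc, hdisj⟩
  refine ⟨b, hbS, hab, fun x hbx => ?_⟩
  obtain ⟨hxS, hax⟩ := horbS x hbx
  exact ⟨hxS, hax, (hfull b x hbb hbx).2.2⟩

end Paper
end

section
/- The automorphism group of the universal homogeneous tournament T is n-"primitive" for all n ≥ 1: for every n ≥ 1, every Aut(T)-orbit O of n-tuples, and every Aut(T)-invariant equivalence relation ~ on O, if ~ contains a pair (a,b) of disjoint tuples, then ~ is the full relation on O. -/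
namespace Paper

section TournamentAux

variable {T : Type*} {E : T → T → Prop}

lemma aut_char {g : Equiv.Perm T} :
    g ∈ AutSet (TS E) ↔ ∀ u v : T, E u v ↔ E (g u) (g v) := by
  constructor
  · intro h u v
    have := h () ![u, v]
    simpa [TS] using this
  · intro h i x
    exact h (x 0) (x 1)

lemma flipE (hE : IsTournament E) {u v u' v' : T} (huv : u ≠ v) (huv' : u' ≠ v')
    (h : E u v ↔ E u' v') : E v u ↔ E v' u' := by
  have h1 : E v u ↔ ¬ E u v :=
    ⟨fun hv => hE.asymm v u hv, fun hn => (hE.total u v huv).resolve_left hn⟩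
  have h2 : E v' u' ↔ ¬ E u' v' :=
    ⟨fun hv => hE.asymm v' u' hv, fun hn => (hE.total u' v' huv').resolve_left hn⟩
  rw [h1, h2, h]

/-- One-point extension property of the universal homogeneous tournament. -/
lemma EP (hE : IsTournament E) (hhom : Homogeneous (TS E)) (huniv : UnivTournament E)
    (S : Finset T) (o : T → Prop) :
    ∃ x : T, x ∉ S ∧ ∀ s ∈ S, E s x ↔ o s := by
  classical
  set m := S.card with hm
  set u : Fin m → T := fun i => ((S.equivFin.symm i : S) : T) with hu
  have huinj : Function.Injective u := by
    intro i j h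
    exact S.equivFin.symm.injective (Subtype.ext h)
  have humem : ∀ i, u i ∈ S := fun i => (S.equivFin.symm i).2
  have husurj : ∀ s ∈ S, ∃ i, u i = s := by
    intro s hs
    exact ⟨S.equivFin ⟨s, hs⟩, by simp [hu]⟩
  have hcases : ∀ i : Fin (m + 1), (∃ i' : Fin m, i = i'.castSucc) ∨ i = Fin.last m := by
    intro i
    by_cases h : (i : ℕ) < m
    · exact Or.inl ⟨⟨(i : ℕ), h⟩, Fin.ext (Fin.coe_castSucc _).symm⟩
    · right
      apply Fin.ext
      have h2 := i.2
      simp only [Fin.val_last]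
      omega
  set R : Fin (m + 1) → Fin (m + 1) → Prop := fun i j =>
    Fin.lastCases (Fin.lastCases False (fun j' => ¬ o (u j')) j)
      (fun i' => Fin.lastCases (o (u i')) (fun j' => E (u i') (u j')) j) i with hRdef
  have hRcc : ∀ i' j' : Fin m, R i'.castSucc j'.castSucc ↔ E (u i') (u j') := by
    intro i' j'
    simp [hRdef]
  have hRcl : ∀ i' : Fin m, R i'.castSucc (Fin.last m) ↔ o (u i') := by
    intro i'
    simp [hRdef]
  have hRlc : ∀ j' : Fin m, R (Fin.last m) j'.castSucc ↔ ¬ o (u j') := by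
    intro j'
    simp [hRdef]
  have hRll : ¬ R (Fin.last m) (Fin.last m) := by
    simp [hRdef]
  have hRt : IsTournament R := by
    refine ⟨?_, ?_, ?_⟩
    · intro i
      rcases hcases i with ⟨i', rfl⟩ | rfl
      · rw [hRcc]
        exact hE.irrefl _
      · exact hRll
    · intro i j
      rcases hcases i with ⟨i', rfl⟩ | rfl <;> rcases hcases j with ⟨j', rfl⟩ | rfl
      · rw [hRcc, hRcc]
        exact hE.asymm _ _
      · rw [hRcl, hRlc]
        exact fun h h2 => h2 h
      · rw [hRlc, hRcl]
        exact fun h => h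
      · exact fun h => (hRll h).elim
    · intro i j hij
      rcases hcases i with ⟨i', rfl⟩ | rfl <;> rcases hcases j with ⟨j', rfl⟩ | rfl
      · rw [hRcc, hRcc]
        have : u i' ≠ u j' := fun h => hij (by rw [huinj h])
        exact hE.total _ _ this
      · rw [hRcl, hRlc]
        exact em _
      · rw [hRlc, hRcl]
        exact (em _).symm
      · exact (hij rfl).elim
  obtain ⟨f, finj, hf⟩ := huniv (m + 1) R hRt
  have hfR : ∀ i j, R i j ↔ E (f i) (f j) := by
    intro i j
    have := hf () ![i, j]
    simpa [TS] using this
  set s : Finset T := Finset.image (fun i : Fin m => f i.castSucc) Finset.univ with hs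
  have hmem : ∀ t ∈ s, ∃ i : Fin m, f i.castSucc = t := by
    intro t ht
    simpa [hs] using ht
  set φ : T → T := fun t =>
    if h : ∃ i : Fin m, f i.castSucc = t then u (Classical.choose h) else t with hφdef
  have hφ : ∀ i : Fin m, φ (f i.castSucc) = u i := by
    intro i
    have hex : ∃ j : Fin m, f j.castSucc = f i.castSucc := ⟨i, rfl⟩
    have hch : f (Classical.choose hex).castSucc = f i.castSucc := Classical.choose_spec hex
    have hci : Classical.choose hex = i := Fin.castSucc_injective m (finj hch)
    simp only [hφdef, dif_pos hex, hci]
  have hinj : ∀ x ∈ s, ∀ y ∈ s, φ x = φ y → x = y := by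
    intro x hx y hy hxy
    obtain ⟨i, hi⟩ := hmem x hx
    obtain ⟨j, hj⟩ := hmem y hy
    rw [← hi, ← hj] at hxy ⊢
    rw [hφ i, hφ j] at hxy
    rw [huinj hxy]
  have hpres : ∀ (i : Unit) (x : Fin 2 → T), (∀ t, x t ∈ s) →
      (TS E i x ↔ TS E i fun t => φ (x t)) := by
    intro _ x hx
    obtain ⟨i0, hi0⟩ := hmem (x 0) (hx 0)
    obtain ⟨i1, hi1⟩ := hmem (x 1) (hx 1)
    show E (x 0) (x 1) ↔ E (φ (x 0)) (φ (x 1))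
    rw [← hi0, ← hi1, hφ i0, hφ i1, ← hfR i0.castSucc i1.castSucc, hRcc]
  obtain ⟨g, hgaut, hgs⟩ := hhom s φ hinj hpres
  have hgchar : ∀ a b : T, E a b ↔ E (g a) (g b) := aut_char.mp hgaut
  have hgf : ∀ i : Fin m, g (f i.castSucc) = u i := by
    intro i
    have : f i.castSucc ∈ s := by
      simp [hs]
    rw [hgs _ this, hφ i]
  refine ⟨g (f (Fin.last m)), ?_, ?_⟩
  · intro hxS
    obtain ⟨i, hi⟩ := husurj _ hxS
    rw [← hgf i] at hi
    have h1 : f i.castSucc = f (Fin.last m) := g.injective hi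
    exact absurd (finj h1) (Fin.castSucc_lt_last i).ne
  · intro t ht
    obtain ⟨i, hi⟩ := husurj t ht
    have key : E (g (f i.castSucc)) (g (f (Fin.last m))) ↔ o (u i) := by
      rw [← hgchar, ← hfR i.castSucc (Fin.last m), hRcl]
    rw [← hi, ← key, hgf i]

end TournamentAux

section TournamentAux2

variable {T : Type*} {E : T → T → Prop}

/-- Realize a fresh copy of the pattern of `b`, avoiding `S`, with prescribed
orientations towards `S`. -/
lemma FRESH (hE : IsTournament E) (hhom : Homogeneous (TS E)) (huniv : UnivTournament E)
    {n : ℕ} (b : Fin n → T) (S : Finset T) (o : T → Fin n → Prop)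
    (hker : ∀ s (j j' : Fin n), b j = b j' → (o s j ↔ o s j')) :
    ∃ d : Fin n → T, (∀ j, d j ∉ S) ∧ (∀ i j, (d i = d j ↔ b i = b j)) ∧
      (∀ i j, E (d i) (d j) ↔ E (b i) (b j)) ∧ (∀ s ∈ S, ∀ j, E s (d j) ↔ o s j) := by
  classical
  suffices h : ∀ m : ℕ, m ≤ n → ∃ d : Fin n → T,
      (∀ j : Fin n, (j : ℕ) < m → d j ∉ S) ∧
      (∀ i j : Fin n, (i : ℕ) < m → (j : ℕ) < m → (d i = d j ↔ b i = b j)) ∧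
      (∀ i j : Fin n, (i : ℕ) < m → (j : ℕ) < m → (E (d i) (d j) ↔ E (b i) (b j))) ∧
      (∀ s ∈ S, ∀ j : Fin n, (j : ℕ) < m → (E s (d j) ↔ o s j)) by
    obtain ⟨d, h1, h2, h3, h4⟩ := h n le_rfl
    exact ⟨d, fun j => h1 j j.2, fun i j => h2 i j i.2 j.2, fun i j => h3 i j i.2 j.2,
      fun s hs j => h4 s hs j j.2⟩
  intro m
  induction m with
  | zero =>
    intro _
    exact ⟨b, fun j hj => absurd hj (Nat.not_lt_zero _),
      fun i j hi => absurd hi (Nat.not_lt_zero _),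
      fun i j hi => absurd hi (Nat.not_lt_zero _),
      fun s hs j hj => absurd hj (Nat.not_lt_zero _)⟩
  | succ m ih =>
    intro hm1
    obtain ⟨d, h1, h2, h3, h4⟩ := ih (by omega)
    have hmn : m < n := by omega
    set J : Fin n := ⟨m, hmn⟩ with hJ
    have hJval : (J : ℕ) = m := rfl
    have hlt : ∀ j : Fin n, (j : ℕ) < m + 1 → j ≠ J → (j : ℕ) < m := by
      intro j hj hne
      have : (j : ℕ) ≠ m := fun h => hne (Fin.ext h)
      omega
    by_cases hdup : ∃ k : Fin n, (k : ℕ) < m ∧ b k = b J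
    · obtain ⟨k, hk, hbk⟩ := hdup
      refine ⟨Function.update d J (d k), ?_, ?_, ?_, ?_⟩
      · intro j hj
        by_cases hje : j = J
        · rw [hje, Function.update_self]
          exact h1 k hk
        · rw [Function.update_of_ne hje]
          exact h1 j (hlt j hj hje)
      · intro i j hi hj
        by_cases hie : i = J <;> by_cases hje : j = J
        · rw [hie, hje]
          simp
        · rw [hie, Function.update_self, Function.update_of_ne hje, ← hbk]
          exact h2 k j hk (hlt j hj hje)
        · rw [hje, Function.update_self, Function.update_of_ne hie]
          rw [h2 i k (hlt i hi hie) hk, hbk]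
        · rw [Function.update_of_ne hie, Function.update_of_ne hje]
          exact h2 i j (hlt i hi hie) (hlt j hj hje)
      · intro i j hi hj
        by_cases hie : i = J <;> by_cases hje : j = J
        · rw [hie, hje, Function.update_self]
          rw [h3 k k hk hk, hbk]
        · rw [hie, Function.update_self, Function.update_of_ne hje]
          rw [h3 k j hk (hlt j hj hje), hbk]
        · rw [hje, Function.update_self, Function.update_of_ne hie]
          rw [h3 i k (hlt i hi hie) hk, hbk]
        · rw [Function.update_of_ne hie, Function.update_of_ne hje]
          exact h3 i j (hlt i hi hie) (hlt j hj hje)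
      · intro s hs j hj
        by_cases hje : j = J
        · rw [hje, Function.update_self]
          rw [h4 s hs k hk]
          exact hker s k J hbk
        · rw [Function.update_of_ne hje]
          exact h4 s hs j (hlt j hj hje)
    · push_neg at hdup
      set S' : Finset T :=
        S ∪ (Finset.univ.filter (fun k : Fin n => (k : ℕ) < m)).image d with hS'
      have hdS' : ∀ i : Fin n, (i : ℕ) < m → d i ∈ S' := by
        intro i hi
        apply Finset.mem_union_right
        exact Finset.mem_image.mpr ⟨i, Finset.mem_filter.mpr ⟨Finset.mem_univ i, hi⟩, rfl⟩
      have hSS' : ∀ t ∈ S, t ∈ S' := fun t ht => Finset.mem_union_left _ ht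
      obtain ⟨x, hxS', hxE⟩ := EP hE hhom huniv S'
        (fun s => (s ∈ S ∧ o s J) ∨ (∃ k : Fin n, (k : ℕ) < m ∧ s = d k ∧ E (b k) (b J)))
      have hxnotS : x ∉ S := fun h => hxS' (hSS' x h)
      have hxnotd : ∀ i : Fin n, (i : ℕ) < m → d i ≠ x := by
        intro i hi h
        exact hxS' (h ▸ hdS' i hi)
      have hEdx : ∀ i : Fin n, (i : ℕ) < m → (E (d i) x ↔ E (b i) (b J)) := by
        intro i hi
        rw [hxE (d i) (hdS' i hi)]
        constructor
        · rintro (⟨hdS, _⟩ | ⟨k, hk, hdk, hEk⟩)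
          · exact absurd hdS (h1 i hi)
          · rw [h2 i k hi hk] at hdk
            rwa [hdk]
        · intro h
          exact Or.inr ⟨i, hi, rfl, h⟩
      refine ⟨Function.update d J x, ?_, ?_, ?_, ?_⟩
      · intro j hj
        by_cases hje : j = J
        · rw [hje, Function.update_self]; exact hxnotS
        · rw [Function.update_of_ne hje]; exact h1 j (hlt j hj hje)
      · intro i j hi hj
        by_cases hie : i = J <;> by_cases hje : j = J
        · rw [hie, hje]; simp
        · rw [hie, Function.update_self, Function.update_of_ne hje]
          have hji := hlt j hj hje
          exact iff_of_false (fun h => hxnotd j hji h.symm)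
            (fun h => hdup j hji h.symm)
        · rw [hje, Function.update_self, Function.update_of_ne hie]
          have hii := hlt i hi hie
          exact iff_of_false (hxnotd i hii) (hdup i hii)
        · rw [Function.update_of_ne hie, Function.update_of_ne hje]
          exact h2 i j (hlt i hi hie) (hlt j hj hje)
      · intro i j hi hj
        by_cases hie : i = J <;> by_cases hje : j = J
        · rw [hie, hje, Function.update_self]
          exact iff_of_false (hE.irrefl x) (hE.irrefl _)
        · rw [hie, Function.update_self, Function.update_of_ne hje]
          have hji := hlt j hj hje
          exact flipE hE (hxnotd j hji) (hdup j hji) (hEdx j hji)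
        · rw [hje, Function.update_self, Function.update_of_ne hie]
          exact hEdx i (hlt i hi hie)
        · rw [Function.update_of_ne hie, Function.update_of_ne hje]
          exact h3 i j (hlt i hi hie) (hlt j hj hje)
      · intro s hs j hj
        by_cases hje : j = J
        · rw [hje, Function.update_self]
          rw [hxE s (hSS' s hs)]
          constructor
          · rintro (⟨_, hoJ⟩ | ⟨k, hk, hsk, _⟩)
            · exact hoJ
            · exact absurd (hsk ▸ hs) (h1 k hk)
          · intro h
            exact Or.inl ⟨hs, h⟩
        · rw [Function.update_of_ne hje]
          exact h4 s hs j (hlt j hj hje)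

end TournamentAux2

section TournamentAux3

variable {T : Type*} {E : T → T → Prop}

/-- Transfer lemma: a pair of disjoint tuples with the same quantifier-free type
as `(x, y)` is an automorphic image of `(x, y)`. -/
lemma TL (hE : IsTournament E) (hhom : Homogeneous (TS E)) {n : ℕ}
    (x y x' y' : Fin n → T) (dxy : DisjTup x y) (dxy' : DisjTup x' y')
    (exx : ∀ i j, x i = x j ↔ x' i = x' j) (eyy : ∀ i j, y i = y j ↔ y' i = y' j)
    (Exx : ∀ i j, E (x i) (x j) ↔ E (x' i) (x' j))
    (Eyy : ∀ i j, E (y i) (y j) ↔ E (y' i) (y' j))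
    (Exy : ∀ i j, E (x i) (y j) ↔ E (x' i) (y' j)) :
    ∃ g ∈ AutSet (TS E), (∀ i, g (x i) = x' i) ∧ (∀ i, g (y i) = y' i) := by
  classical
  have Eyx : ∀ i j, E (y j) (x i) ↔ E (y' j) (x' i) := fun i j =>
    flipE hE (dxy i j) (dxy' i j) (Exy i j)
  set φ : T → T := fun t =>
    if h : ∃ i, x i = t then x' (Classical.choose h)
    else if h : ∃ j, y j = t then y' (Classical.choose h) else t with hφdef
  have hφx : ∀ i, φ (x i) = x' i := by
    intro i
    have hex : ∃ i', x i' = x i := ⟨i, rfl⟩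
    have hch : x (Classical.choose hex) = x i := Classical.choose_spec hex
    have : x' (Classical.choose hex) = x' i := (exx _ _).mp hch
    simp only [hφdef, dif_pos hex, this]
  have hφy : ∀ j, φ (y j) = y' j := by
    intro j
    have hnex : ¬ ∃ i, x i = y j := by
      rintro ⟨i, hi⟩
      exact dxy i j hi
    have hex : ∃ j', y j' = y j := ⟨j, rfl⟩
    have hch : y (Classical.choose hex) = y j := Classical.choose_spec hex
    have : y' (Classical.choose hex) = y' j := (eyy _ _).mp hch
    simp only [hφdef, dif_neg hnex, dif_pos hex, this]
  set s : Finset T := Finset.image x Finset.univ ∪ Finset.image y Finset.univ with hs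
  have hmem : ∀ t ∈ s, (∃ i, x i = t) ∨ (∃ j, y j = t) := by
    intro t ht
    simpa [hs] using ht
  have hxmem : ∀ i, x i ∈ s := by
    intro i
    simp [hs]
  have hymem : ∀ j, y j ∈ s := by
    intro j
    simp [hs]
  have hinj : ∀ p ∈ s, ∀ q ∈ s, φ p = φ q → p = q := by
    intro p hp q hq hpq
    rcases hmem p hp with ⟨i, hi⟩ | ⟨i, hi⟩ <;> rcases hmem q hq with ⟨j, hj⟩ | ⟨j, hj⟩ <;>
      rw [← hi, ← hj] at hpq ⊢
    · rw [hφx i, hφx j] at hpq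
      exact (exx i j).mpr hpq
    · rw [hφx i, hφy j] at hpq
      exact absurd hpq (dxy' i j)
    · rw [hφy i, hφx j] at hpq
      exact absurd hpq.symm (dxy' j i)
    · rw [hφy i, hφy j] at hpq
      exact (eyy i j).mpr hpq
  have hpres : ∀ (u : Unit) (z : Fin 2 → T), (∀ t, z t ∈ s) →
      (TS E u z ↔ TS E u fun t => φ (z t)) := by
    intro _ z hz
    show E (z 0) (z 1) ↔ E (φ (z 0)) (φ (z 1))
    rcases hmem (z 0) (hz 0) with ⟨i, hi⟩ | ⟨i, hi⟩ <;>
      rcases hmem (z 1) (hz 1) with ⟨j, hj⟩ | ⟨j, hj⟩ <;> rw [← hi, ← hj]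
    · rw [hφx i, hφx j]; exact Exx i j
    · rw [hφx i, hφy j]; exact Exy i j
    · rw [hφy i, hφx j]; exact Eyx j i
    · rw [hφy i, hφy j]; exact Eyy i j
  obtain ⟨g, hgaut, hgs⟩ := hhom s φ hinj hpres
  refine ⟨g, hgaut, fun i => ?_, fun j => ?_⟩
  · rw [hgs _ (hxmem i), hφx i]
  · rw [hgs _ (hymem j), hφy j]

lemma orbit_move {n : ℕ} {a₀ x y : Fin n → T}
    (hx : OrbEq (AutSet (TS E)) a₀ x) (hy : OrbEq (AutSet (TS E)) a₀ y) :
    ∃ g ∈ AutSet (TS E), ∀ i, g (x i) = y i := by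
  obtain ⟨g, hg, hgx⟩ := hx
  obtain ⟨h, hh, hhy⟩ := hy
  have hgc := aut_char.mp hg
  have hhc := aut_char.mp hh
  refine ⟨g.symm.trans h, ?_, ?_⟩
  · rw [aut_char]
    intro u v
    show E u v ↔ E (h (g.symm u)) (h (g.symm v))
    rw [← hhc]
    have := hgc (g.symm u) (g.symm v)
    simpa using this.symm
  · intro i
    have hxi : x i = g (a₀ i) := (congrFun hgx i).symm
    show h (g.symm (x i)) = y i
    rw [hxi]
    simp only [Equiv.symm_apply_apply]
    exact congrFun hhy i

lemma orbit_pat {n : ℕ} {a₀ x y : Fin n → T}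
    (hx : OrbEq (AutSet (TS E)) a₀ x) (hy : OrbEq (AutSet (TS E)) a₀ y) :
    (∀ i j, x i = x j ↔ y i = y j) ∧ (∀ i j, E (x i) (x j) ↔ E (y i) (y j)) := by
  obtain ⟨g, hg, hgxy⟩ := orbit_move hx hy
  have hgc := aut_char.mp hg
  constructor
  · intro i j
    rw [← hgxy i, ← hgxy j]
    exact ⟨fun h => congrArg g h, fun h => g.injective h⟩
  · intro i j
    rw [← hgxy i, ← hgxy j]
    exact hgc (x i) (x j)

end TournamentAux3

/-- the automorphism group of the universal homogeneous tournament is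
`n`-"primitive" for all `n ≥ 1`. -/
theorem tournament_primitive {T : Type*} [Countable T] (E : T → T → Prop)
    (hE : IsTournament E) (hhom : Homogeneous (TS E)) (huniv : UnivTournament E) :
    ∀ n : ℕ, 1 ≤ n → PrimitiveN (AutSet (TS E)) n := by
  intro n _ a₀ r hr hinv hex c e hc he
  classical
  obtain ⟨a, b, hab, hdj⟩ := hex
  obtain ⟨ha, hb⟩ := hr.dom hab
  obtain ⟨pab_eq, pab_E⟩ := orbit_pat (E := E) ha hb
  obtain ⟨pac_eq, pac_E⟩ := orbit_pat (E := E) ha hc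
  obtain ⟨pae_eq, pae_E⟩ := orbit_pat (E := E) ha he
  set S₀ : Finset T := Finset.image c Finset.univ ∪ Finset.image e Finset.univ with hS₀
  have hcS₀ : ∀ i, c i ∈ S₀ := by
    intro i
    exact Finset.mem_union_left _ (Finset.mem_image.mpr ⟨i, Finset.mem_univ i, rfl⟩)
  have heS₀ : ∀ i, e i ∈ S₀ := by
    intro i
    exact Finset.mem_union_right _ (Finset.mem_image.mpr ⟨i, Finset.mem_univ i, rfl⟩)
  -- first fresh tuple d₁ : a copy of b over c
  obtain ⟨d₁, hd₁S, hd₁eq, hd₁E, hd₁o⟩ := FRESH hE hhom huniv b S₀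
    (fun s j => ∃ i, s = c i ∧ E (a i) (b j))
    (by intro s j j' h; simp only [h])
  have cross₁ : ∀ i j, E (c i) (d₁ j) ↔ E (a i) (b j) := by
    intro i j
    rw [hd₁o (c i) (hcS₀ i) j]
    constructor
    · rintro ⟨i', hci', hE'⟩
      have : a i = a i' := (pac_eq i i').mpr hci'
      rwa [this]
    · intro h; exact ⟨i, rfl, h⟩
  have hdcd₁ : DisjTup c d₁ := fun i j h => hd₁S j (h ▸ hcS₀ i)
  obtain ⟨g₁, hg₁, hg₁a, hg₁b⟩ := TL hE hhom a b c d₁ hdj hdcd₁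
    pac_eq (fun i j => (hd₁eq i j).symm) pac_E (fun i j => (hd₁E i j).symm)
    (fun i j => (cross₁ i j).symm)
  have rcd₁ : r c d₁ := by
    have h := hinv g₁ hg₁ a b hab
    have h₁ : permTup g₁ a = c := funext hg₁a
    have h₂ : permTup g₁ b = d₁ := funext hg₁b
    rwa [h₁, h₂] at h
  -- second fresh tuple d₂ : a copy of b over d₁ and a "reversed" copy over e
  set S₁ : Finset T := S₀ ∪ Finset.image d₁ Finset.univ with hS₁
  have hd₁S₁ : ∀ i, d₁ i ∈ S₁ := by
    intro i
    exact Finset.mem_union_right _ (Finset.mem_image.mpr ⟨i, Finset.mem_univ i, rfl⟩)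
  have hS₀S₁ : ∀ t ∈ S₀, t ∈ S₁ := fun t ht => Finset.mem_union_left _ ht
  obtain ⟨d₂, hd₂S, hd₂eq, hd₂E, hd₂o⟩ := FRESH hE hhom huniv b S₁
    (fun s j => (∃ i, s = d₁ i ∧ E (a i) (b j)) ∨ (∃ i, s = e i ∧ E (b i) (a j)))
    (by
      intro s j j' h
      have ha' : a j = a j' := (pab_eq j j').mpr h
      simp only [h, ha'])
  have cross₂a : ∀ i j, E (d₁ i) (d₂ j) ↔ E (a i) (b j) := by
    intro i j
    rw [hd₂o (d₁ i) (hd₁S₁ i) j]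
    constructor
    · rintro (⟨i', h', hE'⟩ | ⟨i', h', hE'⟩)
      · have hb' : b i = b i' := (hd₁eq i i').mp h'
        have : a i = a i' := (pab_eq i i').mpr hb'
        rwa [this]
      · exact (hd₁S i (by rw [h']; exact heS₀ i')).elim
    · intro h; exact Or.inl ⟨i, rfl, h⟩
  have cross₂b : ∀ i j, E (e i) (d₂ j) ↔ E (b i) (a j) := by
    intro i j
    rw [hd₂o (e i) (hS₀S₁ _ (heS₀ i)) j]
    constructor
    · rintro (⟨i', h', hE'⟩ | ⟨i', h', hE'⟩)
      · exact (hd₁S i' (by rw [← h']; exact heS₀ i)).elim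
      · have ha' : a i = a i' := (pae_eq i i').mpr h'
        have : b i = b i' := (pab_eq i i').mp ha'
        rwa [this]
    · intro h; exact Or.inr ⟨i, rfl, h⟩
  have hdd₁d₂ : DisjTup d₁ d₂ := fun i j h => hd₂S j (h ▸ hd₁S₁ i)
  obtain ⟨g₂, hg₂, hg₂a, hg₂b⟩ := TL hE hhom a b d₁ d₂ hdj hdd₁d₂
    (fun i j => (pab_eq i j).trans (hd₁eq i j).symm)
    (fun i j => (hd₂eq i j).symm)
    (fun i j => (pab_E i j).trans (hd₁E i j).symm)
    (fun i j => (hd₂E i j).symm)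
    (fun i j => (cross₂a i j).symm)
  have rd₁d₂ : r d₁ d₂ := by
    have h := hinv g₂ hg₂ a b hab
    have h₁ : permTup g₂ a = d₁ := funext hg₂a
    have h₂ : permTup g₂ b = d₂ := funext hg₂b
    rwa [h₁, h₂] at h
  -- the pair (d₂, e) is also an automorphic image of (a, b)
  have hdd₂e : DisjTup d₂ e := fun i j h => hd₂S i (h ▸ hS₀S₁ _ (heS₀ j))
  have crossType : ∀ i j, E (a i) (b j) ↔ E (d₂ i) (e j) := by
    intro i j
    exact (flipE hE (fun h => hdd₂e i j h.symm) (hdj i j).symm (cross₂b j i)).symm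
  obtain ⟨g₃, hg₃, hg₃a, hg₃b⟩ := TL hE hhom a b d₂ e hdj hdd₂e
    (fun i j => (pab_eq i j).trans (hd₂eq i j).symm)
    (fun i j => (pab_eq i j).symm.trans (pae_eq i j))
    (fun i j => (pab_E i j).trans (hd₂E i j).symm)
    (fun i j => (pab_E i j).symm.trans (pae_E i j))
    crossType
  have rd₂e : r d₂ e := by
    have h := hinv g₃ hg₃ a b hab
    have h₁ : permTup g₃ a = d₂ := funext hg₃a
    have h₂ : permTup g₃ b = e := funext hg₃b
    rwa [h₁, h₂] at h
  exact hr.trans (hr.trans rcd₁ rd₁d₂) rd₂e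

end Paper
end

section
/- Let A be a set, n ≥ 1, C a function clone on A preserving the disequality relation ≠, and G a permutation group on A that is n-"primitive" and such that every function in C is n-canonical with respect to G. Let (S, ~) be a minimal subfactor of the action of C on A^n with G-invariant ~-classes. Then any C-invariant approximation η of ~ that is presmooth with respect to G is also very smooth with respect to G. -/
namespace Paper

lemma orbEq_refl' {A : Type*} (G : Subgroup (Equiv.Perm A)) {n : ℕ} (x : Fin n → A) :
    OrbEq (G : Set (Equiv.Perm A)) x x :=
  ⟨1, G.one_mem, rfl⟩

lemma orbEq_perm {A : Type*} (G : Subgroup (Equiv.Perm A)) {n : ℕ} {x y : Fin n → A}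
    (h : OrbEq (G : Set (Equiv.Perm A)) x y) {g : Equiv.Perm A} (hg : g ∈ G) :
    OrbEq (G : Set (Equiv.Perm A)) x (permTup g y) := by
  obtain ⟨h₀, hh₀, rfl⟩ := h
  exact ⟨g * h₀, G.mul_mem hg hh₀, rfl⟩

/-- for a minimal subfactor of an n-canonical clone preserving ≠ over an
n-"primitive" group, every presmooth invariant approximation is very smooth. -/
theorem presmooth_implies_very_smooth {A : Type*} (n : ℕ) (hn : 1 ≤ n)
    (C : ∀ k : ℕ, Set ((Fin k → A) → A)) (hC : IsClone C)
    (G : Subgroup (Equiv.Perm A))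
    (hneq : ∀ (k : ℕ) (f : (Fin k → A) → A), f ∈ C k →
      ∀ x y : Fin k → A, (∀ i, x i ≠ y i) → f x ≠ f y)
    (hprim : PrimitiveN (G : Set (Equiv.Perm A)) n)
    (hcanon : NCanonical (G : Set (Equiv.Perm A)) n C)
    (S : Set (Fin n → A)) (r : (Fin n → A) → (Fin n → A) → Prop)
    (hSinv : SetInvN C S) (hrinv : RelInvN C r) (hr : EqvOn S r)
    (htwo : ∃ a b, a ∈ S ∧ b ∈ S ∧ ¬ r a b)
    (hminimal : ∀ T : Set (Fin n → A), T ⊆ S → SetInvN C T →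
      (∃ a ∈ T, ∃ b ∈ T, ¬ r a b) → T = S)
    (hclassinv : ClassesInv (G : Set (Equiv.Perm A)) S r)
    (S' : Set (Fin n → A)) (η : (Fin n → A) → (Fin n → A) → Prop)
    (happrox : ApproxOf S S' r η)
    (hηG : GRelInv (G : Set (Equiv.Perm A)) η)
    (hηC : RelInvN C η)
    (hpre : Presmooth (G : Set (Equiv.Perm A)) S r η) :
    VerySmooth (G : Set (Equiv.Perm A)) S η := by
  obtain ⟨hSS', hηeq, hηr⟩ := happrox
  -- S is G-invariant
  have hSG : ∀ g ∈ G, ∀ x ∈ S, permTup g x ∈ S := fun g hg x hx =>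
    (hr.dom (hclassinv g hg x hx)).1
  -- the set of tuples in S admitting a disjoint, η-related orbit-mate
  set T : Set (Fin n → A) :=
    {x | x ∈ S ∧ ∃ y, η x y ∧ OrbEq (G : Set (Equiv.Perm A)) x y ∧ DisjTup x y} with hT
  have hTsub : T ⊆ S := fun x hx => hx.1
  -- T is C-invariant
  have hTinv : SetInvN C T := by
    intro k f hf xs hxs
    refine ⟨hSinv k f hf xs (fun i => (hxs i).1), ?_⟩
    choose ys hη hOrb hDisj using fun i => (hxs i).2
    refine ⟨appN f ys, hηC k f hf xs ys hη, hcanon k f hf xs ys hOrb, ?_⟩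
    intro i j
    exact hneq k f hf (fun t => xs t i) (fun t => ys t j) (fun t => hDisj t i j)
  -- T meets two r-classes
  obtain ⟨a0, b0, ha0, hb0, hnr⟩ := htwo
  obtain ⟨b1, c1, hb1S, hc1S, hrab1, _, hηbc1, hObc1, hDbc1⟩ := hpre a0 ha0
  obtain ⟨b2, c2, hb2S, hc2S, hrab2, _, hηbc2, hObc2, hDbc2⟩ := hpre b0 hb0
  have hb1T : b1 ∈ T := ⟨hb1S, c1, hηbc1, hObc1, hDbc1⟩
  have hb2T : b2 ∈ T := ⟨hb2S, c2, hηbc2, hObc2, hDbc2⟩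
  have hnr12 : ¬ r b1 b2 := by
    intro h
    exact hnr (hr.trans (hr.trans hrab1 h) (hr.symm hrab2))
  have hTS : T = S := hminimal T hTsub hTinv ⟨b1, hb1T, b2, hb2T, hnr12⟩
  -- now conclude via primitivity on each orbit
  intro a b haS hbS hab
  have haT : a ∈ T := hTS.symm ▸ haS
  obtain ⟨_, y, hηay, hOay, hDay⟩ := haT
  set ρ : (Fin n → A) → (Fin n → A) → Prop := fun x z =>
    OrbEq (G : Set (Equiv.Perm A)) a x ∧ OrbEq (G : Set (Equiv.Perm A)) a z ∧ η x z with hρ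
  have horbS : ∀ x, OrbEq (G : Set (Equiv.Perm A)) a x → x ∈ S := by
    rintro x ⟨g, hg, rfl⟩
    exact hSG g hg a haS
  have hEqv : EqvOn {c | OrbEq (G : Set (Equiv.Perm A)) a c} ρ := by
    constructor
    · intro x hx
      exact ⟨hx, hx, hηeq.refl x (hSS' (horbS x hx))⟩
    · rintro x z ⟨h1, h2, h3⟩
      exact ⟨h2, h1, hηeq.symm h3⟩
    · rintro x z w ⟨h1, h2, h3⟩ ⟨h4, h5, h6⟩
      exact ⟨h1, h5, hηeq.trans h3 h6⟩
    · rintro x z ⟨h1, h2, _⟩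
      exact ⟨h1, h2⟩
  have hGinv : GRelInv (G : Set (Equiv.Perm A)) ρ := by
    rintro g hg x z ⟨h1, h2, h3⟩
    exact ⟨orbEq_perm G h1 hg, orbEq_perm G h2 hg, hηG g hg x z h3⟩
  have hpair : ∃ x z, ρ x z ∧ DisjTup x z :=
    ⟨a, y, ⟨orbEq_refl' G a, hOay, hηay⟩, hDay⟩
  exact (hprim a ρ hEqv hGinv hpair a b (orbEq_refl' G a) hab).2.2

end Paper
end

section
/- Fundamental theorem of smooth approximations (very smooth case): Let A be a set, C ⊆ D function clones on A, and G a permutation group on A such that D locally interpolates C modulo G. Let (S, ~) be a subfactor of C with G-invariant ~-classes. If ~ has a D-invariant very smooth approximation η with respect to G, then there exists a clone homomorphism from D to the action of C on S/~. Moreover, if ~ has finitely many classes, the homomorphism can be chosen uniformly continuous. -/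
namespace Paper

/-- Local interpolation of `g` by `f` modulo `G`. -/
def Interp {A : Type*} (G : Set (Equiv.Perm A)) {k : ℕ} (f g : (Fin k → A) → A) : Prop :=
  ∀ F : Finset (Fin k → A), ∃ (β : Equiv.Perm A) (α : Fin k → Equiv.Perm A),
    β ∈ G ∧ (∀ i, α i ∈ G) ∧ ∀ x ∈ F, g x = β (f fun i => α i (x i))

/-- Invariance of a subset of the domain under a clone. -/
def SetInv1 {A : Type*} (C : ∀ k : ℕ, Set ((Fin k → A) → A)) (S : Set A) : Prop :=
  ∀ (k : ℕ) (f : (Fin k → A) → A), f ∈ C k → ∀ x : Fin k → A, (∀ i, x i ∈ S) → f x ∈ S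

/-- Invariance of a binary relation on the domain under a clone. -/
def RelInv1 {A : Type*} (C : ∀ k : ℕ, Set ((Fin k → A) → A)) (r : A → A → Prop) : Prop :=
  ∀ (k : ℕ) (f : (Fin k → A) → A), f ∈ C k → ∀ x y : Fin k → A,
    (∀ i, r (x i) (y i)) → r (f x) (f y)

/-- fundamental theorem of smooth approximations, very smooth case:
a `D`-invariant very smooth approximation yields a clone homomorphism from `D` to the
action of `C` on `S/∼` (represented by a map `ξ` into `C` satisfying the homomorphism
identities modulo `∼` on `S`), uniformly continuous if `∼` has finitely many classes. -/
theorem fundamental_theorem_very_smooth {A : Type*}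
    (C D : ∀ k : ℕ, Set ((Fin k → A) → A))
    (hC : IsClone C) (hD : IsClone D) (hCD : ∀ k, C k ⊆ D k)
    (G : Subgroup (Equiv.Perm A))
    (hinterp : ∀ (k : ℕ) (f : (Fin k → A) → A), f ∈ D k →
      ∃ g ∈ C k, Interp (G : Set (Equiv.Perm A)) f g)
    (S : Set A) (r : A → A → Prop)
    (hSinv : SetInv1 C S) (hrinv : RelInv1 C r) (hr : EqvOn S r)
    (hclassinv : ∀ g ∈ (G : Set (Equiv.Perm A)), ∀ a ∈ S, r (g a) a)
    (S' : Set A) (η : A → A → Prop)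
    (hsub : S ⊆ S') (hη : EqvOn S' η)
    (hrefine : ∀ a b, a ∈ S → b ∈ S → η a b → r a b)
    (hηG : ∀ g ∈ (G : Set (Equiv.Perm A)), ∀ a b, η a b → η (g a) (g b))
    (hηD : RelInv1 D η)
    (hvs : ∀ a b, a ∈ S → b ∈ S → (∃ g ∈ (G : Set (Equiv.Perm A)), g a = b) → η a b) :
    ∃ ξ : ∀ k : ℕ, ((Fin k → A) → A) → ((Fin k → A) → A),
      (∀ (k : ℕ) (f : (Fin k → A) → A), f ∈ D k → ξ k f ∈ C k) ∧
      (∀ (k : ℕ) (i : Fin k) (x : Fin k → A), (∀ j, x j ∈ S) → r (ξ k (fun y => y i) x) (x i)) ∧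
      (∀ (k m : ℕ) (f : (Fin k → A) → A) (g : Fin k → (Fin m → A) → A),
        f ∈ D k → (∀ i, g i ∈ D m) → ∀ x : Fin m → A, (∀ j, x j ∈ S) →
        r (ξ m (fun y => f fun i => g i y) x) (ξ k f fun i => ξ m (g i) x)) ∧
      ((∃ (mcl : ℕ) (reps : Fin mcl → A), ∀ a ∈ S, ∃ i, r a (reps i)) →
        ∀ k : ℕ, ∃ B : Finset (Fin k → A), ∀ f g : (Fin k → A) → A,
          f ∈ D k → g ∈ D k → (∀ x ∈ B, f x = g x) →
          ∀ x : Fin k → A, (∀ j, x j ∈ S) → r (ξ k f x) (ξ k g x)) := by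
  classical
  choose p hpC hpI using hinterp
  -- key lemma: the interpolant's value on an S-tuple is η-linked (through some w ∈ S)
  -- to the value of f itself
  have key : ∀ (k : ℕ) (f : (Fin k → A) → A) (hf : f ∈ D k) (x : Fin k → A),
      (∀ j, x j ∈ S) → ∃ w, w ∈ S ∧ η w (p k f hf x) ∧ η w (f x) := by
    intro k f hf x hx
    obtain ⟨β, α, hβ, hα, hloc⟩ := hpI k f hf {x}
    have hpx : p k f hf x = β (f fun i => α i (x i)) := hloc x (Finset.mem_singleton_self x)
    set w := f fun i => α i (x i) with hw
    have hpxS : p k f hf x ∈ S := hSinv k _ (hpC k f hf) x hx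
    have hβinv : β⁻¹ ∈ (G : Set (Equiv.Perm A)) := G.inv_mem hβ
    have hwpx : (β⁻¹ : Equiv.Perm A) (p k f hf x) = w := by
      rw [hpx]; exact Equiv.symm_apply_apply β _
    have hwS : w ∈ S := by
      have h := hclassinv β⁻¹ hβinv (p k f hf x) hpxS
      rw [hwpx] at h
      exact (hr.dom h).1
    refine ⟨w, hwS, ?_, ?_⟩
    · exact hvs w _ hwS hpxS ⟨β, hβ, hpx.symm⟩
    · refine hηD k f hf (fun i => α i (x i)) x fun i => ?_
      have hαiS : α i (x i) ∈ S := (hr.dom (hclassinv (α i) (hα i) (x i) (hx i))).1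
      exact hvs _ _ hαiS (hx i)
        ⟨(α i)⁻¹, G.inv_mem (hα i), Equiv.symm_apply_apply _ _⟩
  set ξ : ∀ k : ℕ, ((Fin k → A) → A) → ((Fin k → A) → A) :=
    fun k f => if h : f ∈ D k then p k f h else f with hξdef
  have hξ : ∀ (k : ℕ) (f : (Fin k → A) → A) (hf : f ∈ D k), ξ k f = p k f hf := by
    intro k f hf
    simp only [hξdef, dif_pos hf]
  refine ⟨ξ, ?_, ?_, ?_, ?_⟩
  · -- maps into C
    intro k f hf
    rw [hξ k f hf]
    exact hpC k f hf
  · -- projections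
    intro k i x hx
    have hf : (fun y : Fin k → A => y i) ∈ D k := hCD k (hC.1 k i)
    rw [hξ k _ hf]
    obtain ⟨w, hwS, h1, h2⟩ := key k _ hf x hx
    have hmem : p k _ hf x ∈ S := hSinv k _ (hpC k _ hf) x hx
    exact hr.trans (hr.symm (hrefine _ _ hwS hmem h1)) (hrefine _ _ hwS (hx i) h2)
  · -- composition
    intro k m f g hf hg x hx
    have hh : (fun y => f fun i => g i y) ∈ D m := hD.2 k m f g hf hg
    rw [hξ m _ hh, hξ k f hf]
    have hξg : (fun i => ξ m (g i) x) = fun i => p m (g i) (hg i) x :=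
      funext fun i => by rw [hξ m (g i) (hg i)]
    rw [hξg]
    set y : Fin k → A := fun i => p m (g i) (hg i) x with hy
    have hySmem : ∀ i, y i ∈ S := fun i => hSinv m _ (hpC m _ (hg i)) x hx
    obtain ⟨w, hwS, hw1, hw2⟩ := key m _ hh x hx
    have hk := fun i => key m (g i) (hg i) x hx
    choose w' hw'S hw'1 hw'2 using hk
    obtain ⟨w'', hw''S, hw''1, hw''2⟩ := key k f hf y hySmem
    have hyg : ∀ i, η (y i) (g i x) := fun i => hη.trans (hη.symm (hw'1 i)) (hw'2 i)
    have hffy : η (f y) (f fun i => g i x) := hηD k f hf y _ hyg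
    have hchain : η (p m _ hh x) (p k f hf y) :=
      hη.trans (hη.symm hw1)
        (hη.trans hw2
          (hη.trans (hη.symm hffy) (hη.trans (hη.symm hw''2) hw''1)))
    have hS1 : p m _ hh x ∈ S := hSinv m _ (hpC m _ hh) x hx
    have hS2 : p k f hf y ∈ S := hSinv k _ (hpC k f hf) y hySmem
    exact hrefine _ _ hS1 hS2 hchain
  · -- uniform continuity when finitely many classes
    rintro ⟨mcl, reps, hreps⟩ k
    refine ⟨Finset.image (fun σ : Fin k → Fin mcl => fun j => reps (σ j)) Finset.univ, ?_⟩
    intro f g2 hf hg2 hagree x hx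
    choose σ hσ using fun j => hreps (x j) (hx j)
    set y : Fin k → A := fun j => reps (σ j) with hy
    have hyB : y ∈ Finset.image (fun σ : Fin k → Fin mcl => fun j => reps (σ j)) Finset.univ :=
      Finset.mem_image.mpr ⟨σ, Finset.mem_univ σ, rfl⟩
    have hfy : f y = g2 y := hagree y hyB
    have hyS : ∀ j, y j ∈ S := fun j => (hr.dom (hσ j)).2
    obtain ⟨w, hwS, hw1, hw2⟩ := key k f hf y hyS
    obtain ⟨w', hw'S, hw'1, hw'2⟩ := key k g2 hg2 y hyS
    have hw'2' : η w' (f y) := by rw [hfy]; exact hw'2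
    have hchain : η (p k f hf y) (p k g2 hg2 y) :=
      hη.trans (hη.symm hw1) (hη.trans hw2 (hη.trans (hη.symm hw'2') hw'1))
    have hrfy : r (p k f hf y) (p k g2 hg2 y) :=
      hrefine _ _ (hSinv k _ (hpC k f hf) y hyS) (hSinv k _ (hpC k g2 hg2) y hyS) hchain
    have h1 : r (p k f hf x) (p k f hf y) := hrinv k _ (hpC k f hf) x y hσ
    have h2 : r (p k g2 hg2 x) (p k g2 hg2 y) := hrinv k _ (hpC k g2 hg2) x y hσ
    rw [hξ k f hf, hξ k g2 hg2]
    exact hr.trans h1 (hr.trans hrfy (hr.symm h2))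

end Paper
end

section
/- Fundamental theorem of smooth approximations (smooth case): Let A be a set, C ⊆ D function clones on A, and G a permutation group on A such that D locally interpolates C modulo G. Let (S, ~) be a subfactor of C with G-invariant ~-classes. If ~ has a D-invariant smooth approximation η with respect to G, then there exists a minion homomorphism from D to the action of C on S/~, and it is uniformly continuous if ~ has finitely many classes. -/
namespace Paper

/-- fundamental theorem of smooth approximations, smooth case:
a `D`-invariant smooth approximation yields a minion homomorphism from `D` to the
action of `C` on `S/∼`, uniformly continuous if `∼` has finitely many classes. -/
theorem fundamental_theorem_smooth {A : Type*}
    (C D : ∀ k : ℕ, Set ((Fin k → A) → A))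
    (hC : IsClone C) (hD : IsClone D) (hCD : ∀ k, C k ⊆ D k)
    (G : Subgroup (Equiv.Perm A))
    (hinterp : ∀ (k : ℕ) (f : (Fin k → A) → A), f ∈ D k →
      ∃ g ∈ C k, Interp (G : Set (Equiv.Perm A)) f g)
    (S : Set A) (r : A → A → Prop)
    (hSinv : SetInv1 C S) (hrinv : RelInv1 C r) (hr : EqvOn S r)
    (hclassinv : ∀ g ∈ (G : Set (Equiv.Perm A)), ∀ a ∈ S, r (g a) a)
    (S' : Set A) (η : A → A → Prop)
    (hsub : S ⊆ S') (hη : EqvOn S' η)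
    (hrefine : ∀ a b, a ∈ S → b ∈ S → η a b → r a b)
    (hηG : ∀ g ∈ (G : Set (Equiv.Perm A)), ∀ a b, η a b → η (g a) (g b))
    (hηD : RelInv1 D η)
    (hsmooth : ∀ a ∈ S, ∃ b, b ∈ S ∧ r a b ∧
      ∀ c, (∃ g ∈ (G : Set (Equiv.Perm A)), g b = c) → c ∈ S ∧ r a c ∧ η b c) :
    ∃ ξ : ∀ k : ℕ, ((Fin k → A) → A) → ((Fin k → A) → A),
      (∀ (k : ℕ) (f : (Fin k → A) → A), f ∈ D k → ξ k f ∈ C k) ∧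
      (∀ (k m : ℕ) (f : (Fin k → A) → A) (σ : Fin k → Fin m),
        f ∈ D k → ∀ x : Fin m → A, (∀ j, x j ∈ S) →
        r (ξ m (fun y => f fun i => y (σ i)) x) (ξ k f fun i => x (σ i))) ∧
      ((∃ (mcl : ℕ) (reps : Fin mcl → A), ∀ a ∈ S, ∃ i, r a (reps i)) →
        ∀ k : ℕ, ∃ B : Finset (Fin k → A), ∀ f g : (Fin k → A) → A,
          f ∈ D k → g ∈ D k → (∀ x ∈ B, f x = g x) →
          ∀ x : Fin k → A, (∀ j, x j ∈ S) → r (ξ k f x) (ξ k g x)) := by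
  classical
  -- S is invariant under G
  have hGS : ∀ g ∈ (G : Set (Equiv.Perm A)), ∀ a ∈ S, g a ∈ S := by
    intro g hg a ha
    exact (hr.dom (hclassinv g hg a ha)).1
  choose! b hbS hbr hborb using hsmooth
  have hX : ∀ (k : ℕ) (f : (Fin k → A) → A), ∃ g : (Fin k → A) → A,
      f ∈ D k → g ∈ C k ∧ Interp (G : Set (Equiv.Perm A)) f g := by
    intro k f
    by_cases h : f ∈ D k
    · obtain ⟨g, hg1, hg2⟩ := hinterp k f h
      exact ⟨g, fun _ => ⟨hg1, hg2⟩⟩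
    · exact ⟨f, fun h' => absurd h' h⟩
  choose ξ hξ using hX
  -- core lemma
  have core : ∀ (k : ℕ) (f : (Fin k → A) → A), f ∈ D k → ∀ y : Fin k → A,
      (∀ i, y i ∈ S) →
      ∃ z ∈ S, r (ξ k f y) z ∧ η (f fun i => b (y i)) z := by
    intro k f hf y hy
    obtain ⟨hgC, hgI⟩ := hξ k f hf
    have hy' : ∀ i, b (y i) ∈ S := fun i => hbS _ (hy i)
    obtain ⟨β, α, hβ, hα, hint⟩ := hgI {fun i => b (y i)}
    have hint1 := hint _ (Finset.mem_singleton_self _)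
    have horb : ∀ i, (α i) (b (y i)) ∈ S ∧ r (y i) ((α i) (b (y i))) ∧
        η (b (y i)) ((α i) (b (y i))) := fun i =>
      hborb (y i) (hy i) _ ⟨α i, hα i, rfl⟩
    have hfw : η (f fun i => b (y i)) (f fun i => (α i) (b (y i))) :=
      hηD k f hf _ _ (fun i => (horb i).2.2)
    have hξy' : ξ k f (fun i => b (y i)) ∈ S := hSinv k _ hgC _ hy'
    have hβinv : (β.symm : Equiv.Perm A) ∈ (G : Set (Equiv.Perm A)) := by
      exact G.inv_mem hβ
    have hfwS : (f fun i => (α i) (b (y i))) ∈ S := by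
      have h1 : β.symm (ξ k f (fun i => b (y i))) ∈ S := hGS β.symm hβinv _ hξy'
      rw [hint1] at h1
      simpa using h1
    have hr1 : r (ξ k f (fun i => b (y i))) (f fun i => (α i) (b (y i))) := by
      rw [hint1]; exact hclassinv β hβ _ hfwS
    have hr0 : r (ξ k f y) (ξ k f (fun i => b (y i))) :=
      hrinv k _ hgC y _ (fun i => hbr _ (hy i))
    exact ⟨_, hfwS, hr.trans hr0 hr1, hfw⟩
  refine ⟨ξ, fun k f hf => (hξ k f hf).1, ?_, ?_⟩
  · intro k m f σ hf x hx
    have hfσ : (fun y : Fin m → A => f fun i => y (σ i)) ∈ D m :=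
      hD.2 k m f (fun i y => y (σ i)) hf (fun i => hD.1 m (σ i))
    obtain ⟨z₂, hz₂S, hrz₂, hηz₂⟩ := core m _ hfσ x hx
    obtain ⟨z₁, hz₁S, hrz₁, hηz₁⟩ := core k f hf (fun i => x (σ i)) (fun i => hx (σ i))
    have hkey : η z₁ z₂ := hη.trans (hη.symm hηz₁) hηz₂
    have hrz : r z₁ z₂ := hrefine _ _ hz₁S hz₂S hkey
    exact hr.trans hrz₂ (hr.symm (hr.trans hrz₁ hrz))
  · rintro ⟨mcl, reps, hreps⟩ k
    refine ⟨Finset.image (fun c : Fin k → Fin mcl => fun i => b (reps (c i))) Finset.univ, ?_⟩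
    intro f g hf hg hfg x hx
    choose c hc using fun i => hreps (x i) (hx i)
    have hyS : ∀ i, reps (c i) ∈ S := fun i => (hr.dom (hc i)).2
    obtain ⟨zf, hzfS, hrzf, hηzf⟩ := core k f hf (fun i => reps (c i)) hyS
    obtain ⟨zg, hzgS, hrzg, hηzg⟩ := core k g hg (fun i => reps (c i)) hyS
    have hmem : (fun i => b (reps (c i))) ∈
        Finset.image (fun c : Fin k → Fin mcl => fun i => b (reps (c i))) Finset.univ :=
      Finset.mem_image.2 ⟨c, Finset.mem_univ c, rfl⟩
    have heq : f (fun i => b (reps (c i))) = g (fun i => b (reps (c i))) := hfg _ hmem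
    have hηzg' : η (f fun i => b (reps (c i))) zg := by rw [heq]; exact hηzg
    have hηkey : η zf zg := hη.trans (hη.symm hηzf) hηzg'
    have hrz : r zf zg := hrefine _ _ hzfS hzgS hηkey
    have h1 : r (ξ k f x) (ξ k f fun i => reps (c i)) :=
      hrinv k _ (hξ k f hf).1 x _ (fun i => hc i)
    have h2 : r (ξ k g x) (ξ k g fun i => reps (c i)) :=
      hrinv k _ (hξ k g hg).1 x _ (fun i => hc i)
    exact hr.trans h1 (hr.trans (hr.trans hrzf hrz) (hr.symm (hr.trans h2 hrzg)))

end Paper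
end

section
/- Let A be a first-order reduct of a homogeneous structure B such that B has a free orbit of pairs. If Pol(A) contains an essential function, then Pol(A) contains a binary essential operation. -/
namespace Paper

private lemma isAut_refl {M : Type*} {ι : Type} {ar : ι → ℕ} (B : Struct M ι ar) :
    IsAut B (Equiv.refl M) := fun _ _ => Iff.rfl

private lemma fodef_pres {M : Type*} {ι : Type} {ar : ι → ℕ} {B : Struct M ι ar}
    {g : Equiv.Perm M} (hg : IsAut B g) {k : ℕ} {R : (Fin k → M) → Prop}
    (hR : FODef B R) : ∀ x, R x ↔ R fun t => g (x t) := by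
  induction hR with
  | basic i => exact hg i
  | eq => intro x; exact (Equiv.apply_eq_iff_eq g).symm
  | reindex σ h ih => intro x; exact ih (x ∘ σ)
  | inter h1 h2 ih1 ih2 => intro x; exact and_congr (ih1 x) (ih2 x)
  | compl h ih => intro x; exact not_congr (ih x)
  | ex h ih =>
    intro x
    constructor
    · rintro ⟨a, ha⟩
      refine ⟨g a, ?_⟩
      have hx := (ih (Fin.snoc x a)).mp ha
      convert hx using 2
      rename_i t
      refine Fin.lastCases ?_ (fun t0 => ?_) t <;> simp
    · rintro ⟨a, ha⟩
      refine ⟨g.symm a, ?_⟩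
      refine (ih (Fin.snoc x (g.symm a))).mpr ?_
      convert ha using 2
      rename_i t
      refine Fin.lastCases ?_ (fun t0 => ?_) t <;> simp

/-- if the base structure has a free orbit of pairs and `Pol(A)` contains an
essential function, then it contains a binary essential operation. -/
theorem binary_essential {M : Type*} {ι : Type} {ar : ι → ℕ} {κ : Type} {ar' : κ → ℕ}
    (B : Struct M ι ar) (Ast : Struct M κ ar')
    (hhom : Homogeneous B)
    (hred : ∀ j, FODef B (Ast j))
    (hfree : ∃ p : M × M, ∀ a b : M, ∃ c : M,
      (∃ g ∈ AutSet B, (g p.1, g p.2) = (c, a)) ∧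
      (∃ g ∈ AutSet B, (g p.1, g p.2) = (c, b)))
    (hess : ∃ (k : ℕ) (f : (Fin k → M) → M), f ∈ PolOps Ast k ∧ Essential f) :
    ∃ f ∈ PolOps Ast 2, DependsOn f 0 ∧ DependsOn f 1 := by
  classical
  by_contra hno
  push_neg at hno
  obtain ⟨p, hfree⟩ := hfree
  obtain ⟨k, f, hf, i, j, hij, hdi, hdj⟩ := hess
  have hpres : ∀ (g : Equiv.Perm M), IsAut B g → ∀ (ρ : κ) (x : Fin (ar' ρ) → M),
      Ast ρ x → Ast ρ fun t => g (x t) :=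
    fun g hg ρ x hx => (fodef_pres hg (hred ρ) x).mp hx
  -- Core translation lemma
  have hW : ∀ (q q' : M) (l : Fin k) (β w : Fin k → M) (b b' : M),
      (∀ r : Fin k, ∃ g : Equiv.Perm M, IsAut B g ∧ (r ≠ l → g q = β r ∧ g q' = w r)) →
      f (Function.update β l b) ≠ f (Function.update β l b') →
      ∀ x, f (Function.update w l x) = f (Function.update β l x) := by
    intro q q' l β w b b' hg hwit x
    choose δ hδaut hδ using hg
    set h : (Fin 2 → M) → M :=
      fun v => f fun r => if r = l then v 0 else δ r (v 1) with hh
    have hpol : h ∈ PolOps Ast 2 := by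
      intro ρ t ht
      have hs : ∀ r : Fin k, Ast ρ fun pp => if r = l then t 0 pp else δ r (t 1 pp) := by
        intro r
        by_cases hr : r = l
        · simpa [hr] using ht 0
        · simpa [hr] using hpres (δ r) (hδaut r) ρ (t 1) (ht 1)
      have := hf ρ (fun r pp => if r = l then t 0 pp else δ r (t 1 pp)) hs
      simpa [hh] using this
    have heval : ∀ u z : M, h ![u, z] = f (Function.update (fun r => δ r z) l u) := by
      intro u z
      simp only [hh]
      congr 1
      funext r
      rw [Function.update_apply]
      simp
    have hupd : ∀ (u v : Fin k → M) (z : M), (∀ r, r ≠ l → u r = v r) →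
        Function.update u l z = Function.update v l z := by
      intro u v z huv
      funext r
      by_cases hr : r = l
      · subst hr; simp
      · rw [Function.update_of_ne hr, Function.update_of_ne hr]; exact huv r hr
    have e1 : ∀ z : M, Function.update (fun r => δ r q) l z = Function.update β l z :=
      fun z => hupd _ _ z fun r hr => (hδ r hr).1
    have e2 : ∀ z : M, Function.update (fun r => δ r q') l z = Function.update w l z :=
      fun z => hupd _ _ z fun r hr => (hδ r hr).2
    have hd0 : DependsOn h 0 := by
      refine ⟨![b, q], ![b', q], ?_, ?_⟩
      · intro j2 hj2
        fin_cases j2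
        · exact absurd rfl hj2
        · rfl
      · rw [heval b q, heval b' q, e1 b, e1 b']
        exact hwit
    have hnd1 : ¬ DependsOn h 1 := fun hd1 => hno h hpol hd0 hd1
    have heq : h ![x, q'] = h ![x, q] := by
      by_contra hne
      refine hnd1 ⟨![x, q'], ![x, q], ?_, hne⟩
      intro j2 hj2
      fin_cases j2
      · rfl
      · exact absurd rfl hj2
    rw [heval x q', heval x q, e1 x, e2 x] at heq
    exact heq
  -- Unpack witnesses
  obtain ⟨xa, xa', hagr_a, hne_a⟩ := hdi
  obtain ⟨xd, xd', hagr_d, hne_d⟩ := hdj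
  have hxa : Function.update xa i (xa i) = xa := Function.update_eq_self i xa
  have hxa' : Function.update xa i (xa' i) = xa' := by
    funext r
    by_cases hr : r = i
    · subst hr; simp
    · rw [Function.update_of_ne hr]; exact hagr_a r hr
  have hwit_a : f (Function.update xa i (xa i)) ≠ f (Function.update xa i (xa' i)) := by
    rw [hxa, hxa']; exact hne_a
  have hxd : Function.update xd j (xd j) = xd := Function.update_eq_self j xd
  have hxd' : Function.update xd j (xd' j) = xd' := by
    funext r
    by_cases hr : r = j
    · subst hr; simp
    · rw [Function.update_of_ne hr]; exact hagr_d r hr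
  have hwit_d : f (Function.update xd j (xd j)) ≠ f (Function.update xd j (xd' j)) := by
    rw [hxd, hxd']; exact hne_d
  -- Freeness in convenient form
  have hfree' : ∀ s t : M, ∃ c : M,
      (∃ g : Equiv.Perm M, IsAut B g ∧ g p.1 = c ∧ g p.2 = s) ∧
      (∃ g : Equiv.Perm M, IsAut B g ∧ g p.1 = c ∧ g p.2 = t) := by
    intro s t
    obtain ⟨c, ⟨g1, hg1, hc1⟩, ⟨g2, hg2, hc2⟩⟩ := hfree s t
    rw [Prod.mk.injEq] at hc1 hc2
    exact ⟨c, ⟨g1, hg1, hc1.1, hc1.2⟩, ⟨g2, hg2, hc2.1, hc2.2⟩⟩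
  -- choices
  have hddex : ∀ r : Fin k, ∃ c, ∃ g : Equiv.Perm M, IsAut B g ∧ g p.1 = c ∧ g p.2 = xd r :=
    fun r => (hfree' (xd r) (xd r)).elim fun c hc => ⟨c, hc.1⟩
  choose dd gd hgd_aut hgd1 hgd2 using hddex
  obtain ⟨cj, ⟨gje, hgje, hgje1, hgje2⟩, ⟨gje', hgjeb, hgje1', hgje2'⟩⟩ :=
    hfree' (xd j) (xd' j)
  have hc'ex : ∀ r : Fin k, ∃ c, ∃ g : Equiv.Perm M, IsAut B g ∧ g p.1 = c ∧ g p.2 = dd r :=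
    fun r => (hfree' (dd r) (dd r)).elim fun c hc => ⟨c, hc.1⟩
  choose c' gc hgc_aut hgc1 hgc2 using hc'ex
  set aa : Fin k → M := fun r => if r = j then cj else c' r with haa
  have hw1ex : ∀ r : Fin k, ∃ c,
      (∃ g : Equiv.Perm M, IsAut B g ∧ g p.1 = c ∧ g p.2 = xa r) ∧
      (∃ g : Equiv.Perm M, IsAut B g ∧ g p.1 = c ∧ g p.2 = aa r) :=
    fun r => hfree' (xa r) (aa r)
  choose w1 hw1a hw1aa using hw1ex
  -- Step 0 : translate the j-witness base to dd
  have S0 : ∀ x, f (Function.update dd j x) = f (Function.update xd j x) := by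
    refine hW p.2 p.1 j xd dd (xd j) (xd' j) ?_ hwit_d
    intro r
    exact ⟨gd r, hgd_aut r, fun _ => ⟨hgd2 r, hgd1 r⟩⟩
  -- Step 1 : translate the i-witness base backward to w1
  have S1 : ∀ x, f (Function.update w1 i x) = f (Function.update xa i x) := by
    refine hW p.2 p.1 i xa w1 (xa i) (xa' i) ?_ hwit_a
    intro r
    obtain ⟨g, hg, h1, h2⟩ := hw1a r
    exact ⟨g, hg, fun _ => ⟨h2, h1⟩⟩
  have hwit1 : f (Function.update w1 i (xa i)) ≠ f (Function.update w1 i (xa' i)) := by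
    rw [S1 (xa i), S1 (xa' i)]; exact hwit_a
  -- Step 2 : translate forward to aa
  have S2 : ∀ x, f (Function.update aa i x) = f (Function.update w1 i x) := by
    refine hW p.1 p.2 i w1 aa (xa i) (xa' i) ?_ hwit1
    intro r
    obtain ⟨g, hg, h1, h2⟩ := hw1aa r
    exact ⟨g, hg, fun _ => ⟨h1, h2⟩⟩
  have hwit2 : f (Function.update aa i (xa i)) ≠ f (Function.update aa i (xa' i)) := by
    rw [S2 (xa i), S2 (xa' i)]; exact hwit1
  -- Step 3 : apply the i-identity at the translated j-witness points
  have S3 : ∀ x, f (Function.update (Function.update dd j (xd j)) i x)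
      = f (Function.update aa i x) := by
    refine hW p.1 p.2 i aa (Function.update dd j (xd j)) (xa i) (xa' i) ?_ hwit2
    intro r
    by_cases hr : r = j
    · subst hr
      refine ⟨gje, hgje, fun _ => ⟨?_, ?_⟩⟩
      · simpa [haa] using hgje1
      · simpa using hgje2
    · refine ⟨gc r, hgc_aut r, fun _ => ⟨?_, ?_⟩⟩
      · simpa [haa, hr] using hgc1 r
      · rw [Function.update_of_ne hr]; exact hgc2 r
  have S3' : ∀ x, f (Function.update (Function.update dd j (xd' j)) i x)
      = f (Function.update aa i x) := by
    refine hW p.1 p.2 i aa (Function.update dd j (xd' j)) (xa i) (xa' i) ?_ hwit2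
    intro r
    by_cases hr : r = j
    · subst hr
      refine ⟨gje', hgjeb, fun _ => ⟨?_, ?_⟩⟩
      · simpa [haa] using hgje1'
      · simpa using hgje2'
    · refine ⟨gc r, hgc_aut r, fun _ => ⟨?_, ?_⟩⟩
      · simpa [haa, hr] using hgc1 r
      · rw [Function.update_of_ne hr]; exact hgc2 r
  -- Conclude
  have hPfix : ∀ z : M, Function.update (Function.update dd j z) i
      (Function.update dd j z i) = Function.update dd j z :=
    fun z => Function.update_eq_self i _
  have hPi : ∀ z : M, Function.update dd j z i = dd i :=
    fun z => Function.update_of_ne hij z dd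
  have h1 : f (Function.update dd j (xd j)) = f (Function.update aa i (dd i)) := by
    rw [← S3 (dd i)]
    congr 1
    rw [← hPi (xd j)]
    exact (hPfix (xd j)).symm
  have h2 : f (Function.update dd j (xd' j)) = f (Function.update aa i (dd i)) := by
    rw [← S3' (dd i)]
    congr 1
    rw [← hPi (xd' j)]
    exact (hPfix (xd' j)).symm
  have : f (Function.update xd j (xd j)) = f (Function.update xd j (xd' j)) := by
    rw [← S0 (xd j), ← S0 (xd' j), h1, h2]
  exact hwit_d this


end Paper
end

section
/- If B is a homogeneous transitive relational structure such that the set of minimal bounds for the age of B contains no structure of size three, then every Aut(B)-orbit of injective pairs is free. -/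
namespace Paper

/-- Auxiliary: a 3-tuple of values. -/
def v3 {M : Type*} (a c d : M) : Fin 3 → M :=
  fun j => if j = 0 then a else if j = 1 then c else d

@[simp] lemma v3_zero {M : Type*} (a c d : M) : v3 a c d 0 = a := rfl
@[simp] lemma v3_one {M : Type*} (a c d : M) : v3 a c d 1 = c := rfl
@[simp] lemma v3_two {M : Type*} (a c d : M) : v3 a c d 2 = d := rfl

lemma fin3_cases (u : Fin 3) : u = 0 ∨ u = 1 ∨ u = 2 := by revert u; decide

lemma isAut_trans {M : Type*} {ι : Type} {ar : ι → ℕ} (B : Struct M ι ar)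
    {g h : Equiv.Perm M} (hg : IsAut B g) (hh : IsAut B h) : IsAut B (g.trans h) :=
  fun i x => (hg i x).trans (hh i fun t => g (x t))

/-- The candidate 3-element structure. -/
def X3 {M : Type*} {ι : Type} {ar : ι → ℕ} (B : Struct M ι ar) (a b c d : M) :
    Struct (Fin 3) ι ar :=
  fun i t => if ∃ p, t p = 0 then B i (fun p => v3 a b b (t p))
    else B i (fun p => v3 a c d (t p))

/-- in a homogeneous transitive structure without minimal bounds of size 3,
every orbit of injective pairs is free. -/
theorem injective_orbits_free {M : Type*} {ι : Type} {ar : ι → ℕ} (B : Struct M ι ar)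
    (hhom : Homogeneous B) (htrans : TransitiveStruct B) (hnb3 : NoMinBound3 B) :
    ∀ a b : M, a ≠ b → ∀ c d : M, ∃ e : M,
      (∃ g ∈ AutSet B, g a = e ∧ g b = c) ∧ (∃ g ∈ AutSet B, g a = e ∧ g b = d) := by
  classical
  intro a b hab c d
  obtain ⟨g1, hg1, hg1b⟩ := htrans b c
  obtain ⟨g2, hg2, hg2b⟩ := htrans b d
  by_cases hcd : c = d
  · exact ⟨g1 a, ⟨g1, hg1, rfl, hg1b⟩, ⟨g1, hg1, rfl, hg1b.trans hcd⟩⟩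
  -- Step 1: X3 embeds into B
  have hembX : Embeds (X3 B a b c d) B := by
    by_contra hne
    refine hnb3 ⟨X3 B a b c d, hne, ?_⟩
    intro s hs
    obtain ⟨m, hm⟩ : ∃ m : Fin 3, m ∉ s := by
      by_contra h
      push_neg at h
      exact hs (Finset.eq_univ_iff_forall.2 h)
    have hval : ∀ z : (↑s : Set (Fin 3)), (z : Fin 3) ∈ s := fun z => z.2
    rcases fin3_cases m with rfl|rfl|rfl
    · -- 0 ∉ s
      refine ⟨fun z => v3 a c d (z : Fin 3), ?_, ?_⟩
      · intro z w h
        have hz : (z : Fin 3) ≠ 0 := fun h' => hm (h' ▸ hval z)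
        have hw : (w : Fin 3) ≠ 0 := fun h' => hm (h' ▸ hval w)
        apply Subtype.ext
        rcases fin3_cases (z : Fin 3) with h1|h1|h1 <;>
          rcases fin3_cases (w : Fin 3) with h2|h2|h2 <;> simp_all
      · intro i x
        have h0 : ¬∃ p, ((x p : Fin 3)) = 0 := by
          rintro ⟨p, hp⟩; exact hm (hp ▸ hval (x p))
        show X3 B a b c d i (fun t => ((x t : Fin 3))) ↔ _
        rw [X3, if_neg h0]
    · -- 1 ∉ s
      refine ⟨fun z => v3 a b b (z : Fin 3), ?_, ?_⟩
      · intro z w h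
        have hz : (z : Fin 3) ≠ 1 := fun h' => hm (h' ▸ hval z)
        have hw : (w : Fin 3) ≠ 1 := fun h' => hm (h' ▸ hval w)
        apply Subtype.ext
        rcases fin3_cases (z : Fin 3) with h1|h1|h1 <;>
          rcases fin3_cases (w : Fin 3) with h2|h2|h2 <;> simp_all
      · intro i x
        show X3 B a b c d i (fun t => ((x t : Fin 3))) ↔ _
        by_cases h0 : ∃ p, ((x p : Fin 3)) = 0
        · rw [X3, if_pos h0]
        · rw [X3, if_neg h0]
          push_neg at h0
          have h2 : ∀ p, ((x p : Fin 3)) = 2 := fun p => by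
            rcases fin3_cases ((x p : Fin 3)) with h|h|h
            · exact absurd h (h0 p)
            · exact absurd (h ▸ hval (x p)) hm
            · exact h
          simp only [h2, v3_two]
          simpa [hg2b] using (hg2 i (fun _ => b)).symm
    · -- 2 ∉ s
      refine ⟨fun z => v3 a b b (z : Fin 3), ?_, ?_⟩
      · intro z w h
        have hz : (z : Fin 3) ≠ 2 := fun h' => hm (h' ▸ hval z)
        have hw : (w : Fin 3) ≠ 2 := fun h' => hm (h' ▸ hval w)
        apply Subtype.ext
        rcases fin3_cases (z : Fin 3) with h1|h1|h1 <;>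
          rcases fin3_cases (w : Fin 3) with h2|h2|h2 <;> simp_all
      · intro i x
        show X3 B a b c d i (fun t => ((x t : Fin 3))) ↔ _
        by_cases h0 : ∃ p, ((x p : Fin 3)) = 0
        · rw [X3, if_pos h0]
        · rw [X3, if_neg h0]
          push_neg at h0
          have h2 : ∀ p, ((x p : Fin 3)) = 1 := fun p => by
            rcases fin3_cases ((x p : Fin 3)) with h|h|h
            · exact absurd h (h0 p)
            · exact h
            · exact absurd (h ▸ hval (x p)) hm
          simp only [h2, v3_one]
          simpa [hg1b] using (hg1 i (fun _ => b)).symm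
  obtain ⟨e, einj, hiff⟩ := hembX
  have he01 : e 0 ≠ e 1 := fun h => absurd (einj h) (by decide)
  have he02 : e 0 ≠ e 2 := fun h => absurd (einj h) (by decide)
  have he12 : e 1 ≠ e 2 := fun h => absurd (einj h) (by decide)
  -- Step 2: automorphism g with g (e 1) = c, g (e 2) = d
  have hA : ∃ g ∈ AutSet B, g (e 1) = c ∧ g (e 2) = d := by
    have inj : ∀ x ∈ ({e 1, e 2} : Finset M), ∀ y ∈ ({e 1, e 2} : Finset M),
        (fun z => if z = e 1 then c else d) x = (fun z => if z = e 1 then c else d) y →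
        x = y := by
      intro x hx y hy hxy
      simp only [Finset.mem_insert, Finset.mem_singleton] at hx hy
      rcases hx with rfl|rfl <;> rcases hy with rfl|rfl
      · rfl
      · exact absurd (show c = d by simpa [he12.symm] using hxy) hcd
      · exact absurd (show d = c by simpa [he12.symm] using hxy).symm hcd
      · rfl
    have pres : ∀ (i : ι) (x : Fin (ar i) → M), (∀ t, x t ∈ ({e 1, e 2} : Finset M)) →
        (B i x ↔ B i fun t => (fun z => if z = e 1 then c else d) (x t)) := by
      intro i x hx
      show B i x ↔ B i fun p => if x p = e 1 then c else d
      set t : Fin (ar i) → Fin 3 := fun p => if x p = e 1 then 1 else 2 with ht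
      have hxe : x = fun p => e (t p) := by
        funext p
        rcases (by simpa using hx p : x p = e 1 ∨ x p = e 2) with h|h
        · have htp : t p = 1 := by simp [ht, h]
          rw [htp]; exact h
        · by_cases h' : x p = e 1
          · have htp : t p = 1 := by simp [ht, h']
            rw [htp]; exact h'
          · have htp : t p = 2 := by simp [ht, h']
            rw [htp]; exact h
      have h0 : ¬∃ p, t p = 0 := by
        rintro ⟨p, hp⟩
        by_cases h' : x p = e 1 <;> simp [ht, h'] at hp
      have hXt : X3 B a b c d i t = B i (fun p => v3 a c d (t p)) := if_neg h0
      have hfx : (fun p => v3 a c d (t p)) = fun p => if x p = e 1 then c else d := by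
        funext p
        by_cases h' : x p = e 1 <;> simp [ht, h']
      calc B i x = B i (fun p => e (t p)) := by rw [← hxe]
        _ ↔ X3 B a b c d i t := (hiff i t).symm
        _ = B i (fun p => v3 a c d (t p)) := hXt
        _ = B i (fun p => if x p = e 1 then c else d) := by rw [hfx]
    obtain ⟨g, hgaut, hgs⟩ :=
      hhom ({e 1, e 2} : Finset M) (fun z => if z = e 1 then c else d) inj pres
    refine ⟨g, hgaut, ?_, ?_⟩
    · simpa using hgs (e 1) (by simp)
    · simpa [he12.symm] using hgs (e 2) (by simp)
  -- Step 3: automorphism h with h a = e 0, h b = e 1 (resp. e 2)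
  have hBC : ∀ w : Fin 3, w ≠ 0 →
      (∀ i : ι, B i (fun _ : Fin (ar i) => b) ↔ B i (fun _ => v3 a c d w)) →
      ∃ h ∈ AutSet B, h a = e 0 ∧ h b = e w := by
    intro w hw hbw
    have inj : ∀ x ∈ ({a, b} : Finset M), ∀ y ∈ ({a, b} : Finset M),
        (fun z => if z = a then e 0 else e w) x = (fun z => if z = a then e 0 else e w) y →
        x = y := by
      intro x hx y hy hxy
      have hew : e 0 ≠ e w := fun h => hw (einj h).symm
      simp only [Finset.mem_insert, Finset.mem_singleton] at hx hy
      rcases hx with rfl|rfl <;> rcases hy with rfl|rfl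
      · rfl
      · exact absurd (show e 0 = e w by simpa [hab.symm] using hxy) hew
      · exact absurd (show e w = e 0 by simpa [hab.symm] using hxy).symm hew
      · rfl
    have pres : ∀ (i : ι) (x : Fin (ar i) → M), (∀ t, x t ∈ ({a, b} : Finset M)) →
        (B i x ↔ B i fun t => (fun z => if z = a then e 0 else e w) (x t)) := by
      intro i x hx
      show B i x ↔ B i fun p => if x p = a then e 0 else e w
      set t : Fin (ar i) → Fin 3 := fun p => if x p = a then 0 else w with ht
      have hxv : (fun p => v3 a b b (t p)) = x := by
        funext p
        rcases (by simpa using hx p : x p = a ∨ x p = b) with h|h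
        · have htp : t p = 0 := by simp [ht, h]
          rw [htp]; simpa using h.symm
        · by_cases h' : x p = a
          · have htp : t p = 0 := by simp [ht, h']
            rw [htp]; simpa using h'.symm
          · have htp : t p = w := by simp [ht, h']
            rw [htp]
            rcases fin3_cases w with rfl|rfl|rfl
            · exact absurd rfl hw
            · simpa using h.symm
            · simpa using h.symm
      have hfx : (fun p => e (t p)) = fun p => if x p = a then e 0 else e w := by
        funext p
        by_cases h' : x p = a <;> simp [ht, h']
      by_cases h0 : ∃ p, t p = 0
      · have hXt : X3 B a b c d i t = B i (fun p => v3 a b b (t p)) := if_pos h0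
        calc B i x = B i (fun p => v3 a b b (t p)) := by rw [hxv]
          _ = X3 B a b c d i t := hXt.symm
          _ ↔ B i (fun p => e (t p)) := hiff i t
          _ = B i (fun p => if x p = a then e 0 else e w) := by rw [hfx]
      · push_neg at h0
        have hxb : ∀ p, x p = b := fun p => by
          rcases (by simpa using hx p : x p = a ∨ x p = b) with h|h
          · exact absurd (by simp [ht, h]) (h0 p)
          · exact h
        have h1t : ∀ p, t p = w := fun p => by simp [ht, hxb p, hab.symm]
        have hXt : X3 B a b c d i t = B i (fun p => v3 a c d (t p)) := by
          refine if_neg ?_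
          rintro ⟨p, hp⟩
          rw [h1t p] at hp
          exact hw hp
        calc B i x = B i (fun _ => b) := by rw [funext hxb]
          _ ↔ B i (fun _ => v3 a c d w) := hbw i
          _ = B i (fun p => v3 a c d (t p)) := by simp [h1t]
          _ = X3 B a b c d i t := hXt.symm
          _ ↔ B i (fun p => e (t p)) := hiff i t
          _ = B i (fun p => if x p = a then e 0 else e w) := by rw [hfx]
    obtain ⟨h, hhaut, hhs⟩ :=
      hhom ({a, b} : Finset M) (fun z => if z = a then e 0 else e w) inj pres
    refine ⟨h, hhaut, ?_, ?_⟩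
    · simpa using hhs a (by simp)
    · simpa [hab.symm] using hhs b (by simp)
  have hB : ∃ h ∈ AutSet B, h a = e 0 ∧ h b = e 1 := by
    refine hBC 1 (by decide) ?_
    intro i
    simpa [hg1b] using hg1 i (fun _ => b)
  have hC : ∃ h ∈ AutSet B, h a = e 0 ∧ h b = e 2 := by
    refine hBC 2 (by decide) ?_
    intro i
    simpa [hg2b] using hg2 i (fun _ => b)
  obtain ⟨g, hgaut, hgc, hgd⟩ := hA
  obtain ⟨h1, h1aut, h1a, h1b⟩ := hB
  obtain ⟨h2, h2aut, h2a, h2b⟩ := hC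
  refine ⟨g (e 0), ⟨h1.trans g, isAut_trans B h1aut hgaut, ?_, ?_⟩,
    ⟨h2.trans g, isAut_trans B h2aut hgaut, ?_, ?_⟩⟩ <;>
    simp [Equiv.trans_apply, h1a, h1b, h2a, h2b, hgc, hgd]

end Paper
end

section
/- Let D be a topologically closed oligomorphic function clone on a countable set A that is a model-complete core, let S ⊆ A^n and let ~ be an equivalence relation on S with G_D-invariant classes. Call a pair (a,b) of n-tuples troublesome if there is a binary h ∈ D with h(a,b), h(b,a) ∈ S disjoint and h(a,b) ≁ h(b,a). Then: (i) if (a,b) is not troublesome and g ∈ D is binary, then (g(a,b), g(b,a)) is not troublesome; (ii) if a and b lie in the same G_D-orbit, then (a,b) is not troublesome. -/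
namespace Paper

/-- `(a, b)` is a troublesome pair. -/
def Troublesome {A : Type*} {n : ℕ} (Dc : ∀ k : ℕ, Set ((Fin k → A) → A))
    (S : Set (Fin n → A)) (r : (Fin n → A) → (Fin n → A) → Prop)
    (a b : Fin n → A) : Prop :=
  ∃ h ∈ Dc 2, appN h ![a, b] ∈ S ∧ appN h ![b, a] ∈ S ∧
    DisjTup (appN h ![a, b]) (appN h ![b, a]) ∧ ¬ r (appN h ![a, b]) (appN h ![b, a])

section Aux19

variable {A : Type*}

lemma appN_pair {n : ℕ} (f : (Fin 2 → A) → A) (a b : Fin n → A) (j : Fin n) :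
    appN f ![a, b] j = f ![a j, b j] := by
  unfold appN; congr 1; funext i; fin_cases i <;> rfl

variable {Dc : ∀ k : ℕ, Set ((Fin k → A) → A)}

lemma unaryMem_comp (hD : IsClone Dc) {u v : A → A}
    (hu : UnaryMem Dc u) (hv : UnaryMem Dc v) : UnaryMem Dc (v ∘ u) :=
  hD.2 1 1 (fun x : Fin 1 → A => v (x 0))
    (fun _ => fun x : Fin 1 → A => u (x 0)) hv (fun _ => hu)

lemma grpOf_symm {σ : Equiv.Perm A} (h : σ ∈ GrpOf Dc) : σ.symm ∈ GrpOf Dc :=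
  ⟨h.2, by simpa using h.1⟩

lemma grpOf_trans (hD : IsClone Dc) {σ τ : Equiv.Perm A}
    (hσ : σ ∈ GrpOf Dc) (hτ : τ ∈ GrpOf Dc) : σ.trans τ ∈ GrpOf Dc := by
  constructor
  · have h := unaryMem_comp hD hσ.1 hτ.1
    simpa [UnaryMem, Function.comp] using h
  · have h := unaryMem_comp hD hτ.2 hσ.2
    simpa [UnaryMem, Function.comp] using h

/-- Composition of a binary clone function with a unary on one side is unary. -/
lemma binary_unary_right (hD : IsClone Dc) {h : (Fin 2 → A) → A} (hh : h ∈ Dc 2)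
    {α : A → A} (hα : UnaryMem Dc α) :
    UnaryMem Dc (fun x => h ![x, α x]) := by
  have hmem := hD.2 2 1 h
    ![(fun x : Fin 1 → A => x 0), (fun x : Fin 1 → A => α (x 0))] hh
    (by intro i; fin_cases i
        · exact hD.1 1 0
        · exact hα)
  have : (fun x : Fin 1 → A =>
      h fun i => ![(fun x : Fin 1 → A => x 0), (fun x : Fin 1 → A => α (x 0))] i x)
      = (fun x : Fin 1 → A => h ![x 0, α (x 0)]) := by
    funext x; congr 1; funext i; fin_cases i <;> rfl
  rw [UnaryMem]; rw [← this]; exact hmem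

lemma binary_unary_left (hD : IsClone Dc) {h : (Fin 2 → A) → A} (hh : h ∈ Dc 2)
    {α : A → A} (hα : UnaryMem Dc α) :
    UnaryMem Dc (fun x => h ![α x, x]) := by
  have hmem := hD.2 2 1 h
    ![(fun x : Fin 1 → A => α (x 0)), (fun x : Fin 1 → A => x 0)] hh
    (by intro i; fin_cases i
        · exact hα
        · exact hD.1 1 0)
  have : (fun x : Fin 1 → A =>
      h fun i => ![(fun x : Fin 1 → A => α (x 0)), (fun x : Fin 1 → A => x 0)] i x)
      = (fun x : Fin 1 → A => h ![α (x 0), x 0]) := by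
    funext x; congr 1; funext i; fin_cases i <;> rfl
  rw [UnaryMem]; rw [← this]; exact hmem

end Aux19

/-- (i) non-troublesomeness is preserved by binary operations of `D`;
(ii) pairs in the same `G_D`-orbit are not troublesome. -/
theorem troublesome_pairs {A : Type*} [Countable A] (n : ℕ)
    (Dc : ∀ k : ℕ, Set ((Fin k → A) → A))
    (hD : IsClone Dc) (hclosed : CloneClosed Dc)
    (holig : Oligo (GrpOf Dc)) (hmc : MCCoreClone Dc)
    (S : Set (Fin n → A)) (r : (Fin n → A) → (Fin n → A) → Prop)
    (hr : EqvOn S r) (hclassinv : ClassesInv (GrpOf Dc) S r) :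
    (∀ a b : Fin n → A, ∀ g ∈ Dc 2, ¬ Troublesome Dc S r a b →
      ¬ Troublesome Dc S r (appN g ![a, b]) (appN g ![b, a])) ∧
    (∀ a b : Fin n → A, OrbEq (GrpOf Dc) a b → ¬ Troublesome Dc S r a b) := by
  constructor
  · -- Part (i)
    rintro a b g hg hnab ⟨h, hh, hS1, hS2, hdisj, hne⟩
    apply hnab
    -- compose h with g and the swap of g
    set h' : (Fin 2 → A) → A := fun x => h ![g ![x 0, x 1], g ![x 1, x 0]] with hh'def
    have hgid : (fun x : Fin 2 → A => g ![x 0, x 1]) ∈ Dc 2 := by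
      have : (fun x : Fin 2 → A => g ![x 0, x 1]) = g := by
        funext x; congr 1; funext i; fin_cases i <;> rfl
      rw [this]; exact hg
    have hgsw : (fun x : Fin 2 → A => g ![x 1, x 0]) ∈ Dc 2 := by
      have hmem := hD.2 2 2 g
        ![(fun x : Fin 2 → A => x 1), (fun x : Fin 2 → A => x 0)] hg
        (by intro i; fin_cases i
            · exact hD.1 2 1
            · exact hD.1 2 0)
      have : (fun x : Fin 2 → A =>
          g fun i => ![(fun x : Fin 2 → A => x 1), (fun x : Fin 2 → A => x 0)] i x)
          = (fun x : Fin 2 → A => g ![x 1, x 0]) := by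
        funext x; congr 1; funext i; fin_cases i <;> rfl
      rw [← this]; exact hmem
    have hh'mem : h' ∈ Dc 2 := by
      have hmem := hD.2 2 2 h
        ![(fun x : Fin 2 → A => g ![x 0, x 1]), (fun x : Fin 2 → A => g ![x 1, x 0])] hh
        (by intro i; fin_cases i
            · exact hgid
            · exact hgsw)
      have : (fun x : Fin 2 → A => h fun i =>
          ![(fun x : Fin 2 → A => g ![x 0, x 1]), (fun x : Fin 2 → A => g ![x 1, x 0])] i x)
          = h' := by
        funext x; rw [hh'def]; congr 1; funext i; fin_cases i <;> rfl
      rw [← this]; exact hmem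
    have key1 : appN h' ![a, b] = appN h ![appN g ![a, b], appN g ![b, a]] := by
      funext j
      simp only [appN_pair, hh'def, Matrix.cons_val_zero, Matrix.cons_val_one, Matrix.head_cons]
    have key2 : appN h' ![b, a] = appN h ![appN g ![b, a], appN g ![a, b]] := by
      funext j
      simp only [appN_pair, hh'def, Matrix.cons_val_zero, Matrix.cons_val_one, Matrix.head_cons]
    exact ⟨h', hh'mem, by rw [key1]; exact hS1, by rw [key2]; exact hS2,
      by rw [key1, key2]; exact hdisj, by rw [key1, key2]; exact hne⟩
  · -- Part (ii)
    rintro a b ⟨α, hα, hab⟩ ⟨h, hh, hS1, hS2, hdisj, hne⟩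
    apply hne
    classical
    -- u(x) = h(x, αx), v(x) = h(αx, x) are unary members of the clone
    have hu : UnaryMem Dc (fun x => h ![x, α x]) := binary_unary_right hD hh hα.1
    have hv : UnaryMem Dc (fun x => h ![α x, x]) := binary_unary_left hD hh hα.1
    -- approximate them by invertibles on the entries of `a`
    set F : Finset A := Finset.image a Finset.univ with hF
    obtain ⟨σ, hσ, hσa⟩ := (hmc _).1 hu F
    obtain ⟨τ, hτ, hτa⟩ := (hmc _).1 hv F
    have hca : ∀ j, appN h ![a, b] j = σ (a j) := by
      intro j
      rw [appN_pair]
      have := hσa (a j) (Finset.mem_image_of_mem a (Finset.mem_univ j))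
      rw [← this]
      congr 1
      funext i; fin_cases i
      · rfl
      · show b j = α (a j)
        exact (congrFun hab j).symm
    have hda : ∀ j, appN h ![b, a] j = τ (a j) := by
      intro j
      rw [appN_pair]
      have := hτa (a j) (Finset.mem_image_of_mem a (Finset.mem_univ j))
      rw [← this]
      congr 1
      funext i; fin_cases i
      · show b j = α (a j)
        exact (congrFun hab j).symm
      · rfl
    -- the permutation ρ = τ ∘ σ⁻¹ maps h(a,b) to h(b,a)
    set ρ : Equiv.Perm A := σ.symm.trans τ with hρdef
    have hρ : ρ ∈ GrpOf Dc := grpOf_trans hD (grpOf_symm hσ) hτ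
    have hmap : permTup ρ (appN h ![a, b]) = appN h ![b, a] := by
      funext j
      show ρ (appN h ![a, b] j) = appN h ![b, a] j
      rw [hca j, hda j, hρdef]
      simp
    have := hclassinv ρ hρ (appN h ![a, b]) hS1
    rw [hmap] at this
    exact hr.symm this

end Paper
end
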